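/- arXiv:2201.12850 — 9 statements merged into one kernel-verified Lean document; each statement's English description precedes it below -/
import Mathlib

section
/- If G is a stepwise transmission irregular (STI) graph of order n and size m (number of edges), then m ≤ (n² − 1)/4. -/
open Finset

variable {V : Type*}

/-- The transmission of a vertex `v`: the sum of distances from `v` to all vertices. -/
noncomputable def transmission [Fintype V] (G : SimpleGraph V) (v : V) : ℕ :=
  ∑ u, G.dist v u

/-- A connected graph is stepwise transmission irregular (STI) if the transmissions of
the endpoints of every edge differ by exactly one. -/
def IsSTI [Fintype V] (G : SimpleGraph V) : Prop :=
  G.Connected ∧ ∀ u v : V, G.Adj u v →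
    ((transmission G u : ℤ) - (transmission G v : ℤ)).natAbs = 1

private lemma walk_parity {G : SimpleGraph V} (f : V → ZMod 2)
    (hf : ∀ u v : V, G.Adj u v → f v = f u + 1) :
    ∀ {u v : V} (p : G.Walk u v), f v = f u + p.length := by
  intro u v p
  induction p with
  | nil => simp
  | cons h p ih =>
    rename_i x y z
    rw [ih, hf x y h]
    simp [SimpleGraph.Walk.length_cons]
    push_cast
    ring

theorem sti_size_upper_bound [Fintype V] (G : SimpleGraph V) (hSTI : IsSTI G) :
    4 * G.edgeSet.ncard ≤ Fintype.card V ^ 2 - 1 := by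
  classical
  obtain ⟨hconn, hstep⟩ := hSTI
  set n := Fintype.card V with hn
  set f : V → ZMod 2 := fun v => (transmission G v : ZMod 2) with hfdef
  have hadj : ∀ u v : V, G.Adj u v → f v = f u + 1 := by
    intro u v h
    have h1 := hstep u v h
    have key : ∀ a b : ZMod 2, a ≠ b → b = a + 1 := by decide
    apply key
    intro hc
    have h2 : ((2 : ℤ)) ∣ ((transmission G u : ℤ) - (transmission G v : ℤ)) := by
      apply (ZMod.intCast_zmod_eq_zero_iff_dvd
        ((transmission G u : ℤ) - (transmission G v : ℤ)) 2).mp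
      push_cast
      simp only [hfdef] at hc
      rw [hc]; ring
    rw [← Int.dvd_natAbs, h1] at h2
    norm_num at h2
  have hdist : ∀ u v : V, (G.dist u v : ZMod 2) = f u + f v := by
    intro u v
    obtain ⟨p, hp⟩ := hconn.exists_walk_length_eq_dist u v
    have h1 := walk_parity f hadj p
    rw [hp] at h1
    have neg : ∀ a : ZMod 2, -a = a := by decide
    have h2 : (G.dist u v : ZMod 2) = f v - f u := by rw [h1]; ring
    rw [h2, sub_eq_add_neg, neg, add_comm]
  have hmaster : ∀ v : V, f v = (n : ZMod 2) * f v + ∑ u, f u := by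
    intro v
    have h1 : f v = ∑ u, (G.dist v u : ZMod 2) := by
      simp only [hfdef, transmission]; push_cast; rfl
    conv_lhs => rw [h1]
    have h2 : ∀ u : V, (G.dist v u : ZMod 2) = f v + f u := fun u => hdist v u
    simp only [h2]
    rw [Finset.sum_add_distrib, Finset.sum_const, Finset.card_univ, nsmul_eq_mul]
  by_cases hE : G.edgeSet = ∅
  · rw [hE]
    simp only [Set.ncard_empty, mul_zero]
    exact Nat.zero_le _
  · obtain ⟨e, he⟩ := Set.nonempty_iff_ne_empty.mpr hE
    induction e using Sym2.ind with
    | _ x y =>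
    rw [SimpleGraph.mem_edgeSet] at he
    have hxy : f y = f x + 1 := hadj x y he
    have hne : f x ≠ f y := by
      rw [hxy]; exact (by decide : ∀ a : ZMod 2, a ≠ a + 1) _
    obtain ⟨v0, hv0⟩ : ∃ v, f v = 0 := by
      rcases (by decide : ∀ a b : ZMod 2, a ≠ b → a = 0 ∨ b = 0) _ _ hne with h | h
      exacts [⟨x, h⟩, ⟨y, h⟩]
    obtain ⟨v1, hv1⟩ : ∃ v, f v = 1 := by
      rcases (by decide : ∀ a b : ZMod 2, a ≠ b → a = 1 ∨ b = 1) _ _ hne with h | h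
      exacts [⟨x, h⟩, ⟨y, h⟩]
    have hS : (∑ u, f u) = 0 := by
      have h := hmaster v0; rw [hv0] at h; simpa using h.symm
    have hnodd : (n : ZMod 2) = 1 := by
      have h := hmaster v1; rw [hv1, hS] at h; simpa using h.symm
    have hnodd' : ¬ (2 ∣ n) := by
      intro h
      have := (ZMod.natCast_eq_zero_iff n 2).mpr h
      rw [hnodd] at this
      exact one_ne_zero this
    -- counting
    set A : Finset V := univ.filter (fun v => f v = 0) with hA
    set B : Finset V := univ.filter (fun v => ¬ f v = 0) with hB
    have hab : A.card + B.card = n := by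
      rw [hA, hB, Finset.card_filter_add_card_filter_not, Finset.card_univ]
    have hcard : 2 * G.edgeSet.ncard ≤ 2 * (A.card * B.card) := by
      have h1 : G.edgeSet.ncard = G.edgeFinset.card := by
        rw [Set.ncard_eq_toFinset_card']
        congr 1
      rw [h1, G.two_mul_card_edgeFinset]
      have hsub : (univ.filter fun (p : V × V) => G.Adj p.1 p.2) ⊆
          A ×ˢ B ∪ B ×ˢ A := by
        intro p hp
        simp only [Finset.mem_filter, Finset.mem_univ, true_and] at hp
        have h2 := hadj p.1 p.2 hp
        simp only [Finset.mem_union, Finset.mem_product, hA, hB, Finset.mem_filter,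
          Finset.mem_univ, true_and]
        rcases (by decide : ∀ a : ZMod 2, a = 0 ∨ ¬ a = 0) (f p.1) with h | h
        · left; exact ⟨h, by rw [h2, h]; decide⟩
        · right
          refine ⟨h, ?_⟩
          rcases (by decide : ∀ a : ZMod 2, a = 0 ∨ a = 1) (f p.1) with h3 | h3
          · exact absurd h3 h
          · rw [h2, h3]; decide
      calc (univ.filter fun (p : V × V) => G.Adj p.1 p.2).card
          ≤ (A ×ˢ B ∪ B ×ˢ A).card := Finset.card_le_card hsub
        _ ≤ (A ×ˢ B).card + (B ×ˢ A).card := Finset.card_union_le _ _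
        _ = 2 * (A.card * B.card) := by
            rw [Finset.card_product, Finset.card_product]; ring
    have hm : G.edgeSet.ncard ≤ A.card * B.card := by omega
    have haneb : A.card ≠ B.card := by omega
    have key : 4 * (A.card * B.card) + 1 ≤ n ^ 2 := by
      have h1 : (1 : ℤ) ≤ ((A.card : ℤ) - B.card) ^ 2 := by
        have h2 : ((A.card : ℤ) - B.card) ≠ 0 := by
          intro h; apply haneb; exact_mod_cast sub_eq_zero.mp h
        nlinarith [Int.one_le_abs h2, sq_abs ((A.card : ℤ) - B.card), abs_nonneg ((A.card : ℤ) - B.card)]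
      have h3 : ((n : ℤ)) = (A.card : ℤ) + B.card := by exact_mod_cast hab.symm
      zify
      nlinarith [h1, h3]
    omega
end

section
/- Let G be a stepwise transmission irregular (STI) graph of order n and size m. Then m = (n² − 1)/4 if and only if G is isomorphic to the complete bipartite graph K_{(n−1)/2, (n+1)/2}. -/
open Finset

variable {V : Type*}

private def leftEquivSTI (α β : Type*) : {x : α ⊕ β // x.isLeft = true} ≃ α where
  toFun x := x.1.getLeft x.2
  invFun a := ⟨.inl a, rfl⟩
  left_inv := by rintro ⟨(x|x), h⟩ <;> simp_all
  right_inv a := rfl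

private def rightEquivSTI (α β : Type*) : {x : α ⊕ β // ¬ x.isLeft = true} ≃ β where
  toFun x := x.1.getRight (by rcases x with ⟨(y|y), h⟩ <;> simp_all <;> exact h rfl)
  invFun b := ⟨.inr b, by simp⟩
  left_inv := by rintro ⟨(x|x), h⟩ <;> simp_all
  right_inv b := rfl

private lemma iso_of_partition_STI [Fintype V] (G : SimpleGraph V) (p : V → Prop)
    [DecidablePred p] {a b : ℕ}
    (hadj : ∀ u v, G.Adj u v ↔ ((p u ∧ ¬ p v) ∨ (¬ p u ∧ p v)))
    (ha : Fintype.card {x // p x} = a) (hb : Fintype.card {x // ¬ p x} = b) :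
    Nonempty (G ≃g completeBipartiteGraph (Fin a) (Fin b)) := by
  let e1 : {x // p x} ≃ Fin a := Fintype.equivFinOfCardEq ha
  let e2 : {x // ¬ p x} ≃ Fin b := Fintype.equivFinOfCardEq hb
  let e : V ≃ (Fin a ⊕ Fin b) := (Equiv.sumCompl p).symm.trans (Equiv.sumCongr e1 e2)
  have key : ∀ x : V, (e x).isLeft = true ↔ p x := by
    intro x
    by_cases hx : p x
    · simp [e, Equiv.sumCompl_symm_apply_of_pos hx, hx]
    · simp [e, Equiv.sumCompl_symm_apply_of_neg hx, hx]
  have key' : ∀ x : V, (e x).isRight = true ↔ ¬ p x := by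
    intro x
    rw [← key x]
    cases (e x) <;> simp
  refine ⟨⟨e, ?_⟩⟩
  intro u v
  rw [hadj]
  simp only [completeBipartiteGraph_adj, key, key']

private lemma edge_count_of_partition_STI [Fintype V] (G : SimpleGraph V)
    [DecidableRel G.Adj] (p : V → Prop) [DecidablePred p]
    (hadj : ∀ u v, G.Adj u v ↔ ((p u ∧ ¬ p v) ∨ (¬ p u ∧ p v))) :
    2 * G.edgeFinset.card =
      2 * ((univ.filter p).card * (univ.filter (fun v => ¬ p v)).card) := by
  have hnbr1 : ∀ v, p v → G.neighborFinset v = univ.filter (fun w => ¬ p w) := by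
    intro v hv
    ext w
    simp [SimpleGraph.mem_neighborFinset, hadj, hv]
  have hnbr2 : ∀ v, ¬ p v → G.neighborFinset v = univ.filter p := by
    intro v hv
    ext w
    simp only [SimpleGraph.mem_neighborFinset, hadj, mem_filter, mem_univ, true_and]
    tauto
  have hdeg := G.sum_degrees_eq_twice_card_edges
  rw [← Finset.sum_filter_add_sum_filter_not univ p] at hdeg
  have h1 : ∑ v ∈ univ.filter p, G.degree v =
      (univ.filter p).card * (univ.filter (fun v => ¬ p v)).card := by
    rw [Finset.sum_congr rfl (fun v hv => ?_), Finset.sum_const, smul_eq_mul]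
    rw [← SimpleGraph.card_neighborFinset_eq_degree, hnbr1 v (by simpa using hv)]
  have h2 : ∑ v ∈ univ.filter (fun v => ¬ p v), G.degree v =
      (univ.filter (fun v => ¬ p v)).card * (univ.filter p).card := by
    rw [Finset.sum_congr rfl (fun v hv => ?_), Finset.sum_const, smul_eq_mul]
    rw [← SimpleGraph.card_neighborFinset_eq_degree, hnbr2 v (by simpa using hv)]
  rw [h1] at hdeg
  rw [h2] at hdeg
  have hc := Nat.mul_comm (univ.filter p).card (univ.filter (fun v => ¬ p v)).card
  omega

theorem sti_size_eq_max_iff_completeBipartite [Fintype V] (G : SimpleGraph V)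
    (hSTI : IsSTI G) :
    4 * G.edgeSet.ncard = Fintype.card V ^ 2 - 1 ↔
      Nonempty (G ≃g completeBipartiteGraph (Fin ((Fintype.card V - 1) / 2)) (Fin ((Fintype.card V + 1) / 2))) := by
  classical
  have hncard : G.edgeSet.ncard = G.edgeFinset.card := by
    rw [Set.ncard_eq_toFinset_card', SimpleGraph.edgeFinset]
  have hn1 : 0 < Fintype.card V := Fintype.card_pos_iff.mpr hSTI.1.nonempty
  set n := Fintype.card V with hn
  constructor
  · intro hm
    rw [hncard] at hm
    -- the bipartition by parity of transmission
    set p : V → Prop := fun v => Even (transmission G v) with hp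
    have hpadj : ∀ u v, G.Adj u v → ¬ (p u ↔ p v) := by
      intro u v huv hiff
      have h1 := hSTI.2 u v huv
      rw [Int.natAbs_eq_iff] at h1
      simp only [hp, Nat.even_iff] at hiff
      omega
    set A := univ.filter p with hA
    set B := univ.filter (fun v => ¬ p v) with hB
    have hab : A.card + B.card = n := by
      rw [hA, hB, hn]
      exact Finset.card_filter_add_card_filter_not (p := p)
    -- n is odd
    have hodd : n % 2 = 1 := by
      by_contra h
      have h0 : n % 2 = 0 := by omega
      have hpow : n ^ 2 % 2 = 0 := by rw [Nat.pow_mod, h0]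
      have hnp : 1 ≤ n ^ 2 := Nat.one_le_pow _ _ hn1
      omega
    have hne : A.card ≠ B.card := by omega
    -- degree bounds
    have hsub1 : ∀ v ∈ A, G.neighborFinset v ⊆ B := by
      intro v hv w hw
      rw [SimpleGraph.mem_neighborFinset] at hw
      have := hpadj v w hw
      simp only [hA, mem_filter, mem_univ, true_and] at hv
      simp only [hB, mem_filter, mem_univ, true_and]
      tauto
    have hsub2 : ∀ v ∈ B, G.neighborFinset v ⊆ A := by
      intro v hv w hw
      rw [SimpleGraph.mem_neighborFinset] at hw
      have := hpadj v w hw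
      simp only [hB, mem_filter, mem_univ, true_and] at hv
      simp only [hA, mem_filter, mem_univ, true_and]
      tauto
    have hdb1 : ∀ v ∈ A, G.degree v ≤ B.card := fun v hv => by
      rw [← SimpleGraph.card_neighborFinset_eq_degree]
      exact Finset.card_le_card (hsub1 v hv)
    have hdb2 : ∀ v ∈ B, G.degree v ≤ A.card := fun v hv => by
      rw [← SimpleGraph.card_neighborFinset_eq_degree]
      exact Finset.card_le_card (hsub2 v hv)
    have hdegsum := G.sum_degrees_eq_twice_card_edges
    rw [← Finset.sum_filter_add_sum_filter_not univ p, ← hA, ← hB] at hdegsum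
    have hb1 : ∑ v ∈ A, G.degree v ≤ A.card * B.card := by
      calc ∑ v ∈ A, G.degree v ≤ ∑ _v ∈ A, B.card := Finset.sum_le_sum hdb1
        _ = A.card * B.card := by rw [Finset.sum_const, smul_eq_mul]
    have hb2 : ∑ v ∈ B, G.degree v ≤ A.card * B.card := by
      calc ∑ v ∈ B, G.degree v ≤ ∑ _v ∈ B, A.card := Finset.sum_le_sum hdb2
        _ = A.card * B.card := by rw [Finset.sum_const, smul_eq_mul, mul_comm]
    have habz : (A.card : ℤ) + B.card = n := by exact_mod_cast hab
    have key : 4 * (A.card * B.card) + 1 ≤ n ^ 2 := by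
      have hx : (A.card : ℤ) - B.card ≠ 0 := by
        intro h; apply hne; omega
      have h1 : 1 ≤ ((A.card : ℤ) - B.card) ^ 2 := by
        rcases hx.lt_or_gt with h | h <;> nlinarith
      have h2 : ((A.card : ℤ) + B.card) ^ 2 =
          4 * ((A.card : ℤ) * B.card) + ((A.card : ℤ) - B.card) ^ 2 := by ring
      rw [habz] at h2
      zify
      push_cast
      nlinarith
    have hSA : ∑ v ∈ A, G.degree v = A.card * B.card := by omega
    have hSB : ∑ v ∈ B, G.degree v = A.card * B.card := by omega
    have hdegA : ∀ v ∈ A, G.degree v = B.card := by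
      intro v hv
      by_contra hlt
      have hv' : G.degree v < B.card := lt_of_le_of_ne (hdb1 v hv) hlt
      have hlt2 : ∑ v ∈ A, G.degree v < ∑ _v ∈ A, B.card :=
        Finset.sum_lt_sum hdb1 ⟨v, hv, hv'⟩
      rw [Finset.sum_const, smul_eq_mul] at hlt2
      omega
    have hdegB : ∀ v ∈ B, G.degree v = A.card := by
      intro v hv
      by_contra hlt
      have hv' : G.degree v < A.card := lt_of_le_of_ne (hdb2 v hv) hlt
      have hlt2 : ∑ v ∈ B, G.degree v < ∑ _v ∈ B, A.card :=
        Finset.sum_lt_sum hdb2 ⟨v, hv, hv'⟩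
      rw [Finset.sum_const, smul_eq_mul, mul_comm] at hlt2
      omega
    have hNA : ∀ v ∈ A, G.neighborFinset v = B := by
      intro v hv
      apply Finset.eq_of_subset_of_card_le (hsub1 v hv)
      rw [SimpleGraph.card_neighborFinset_eq_degree, hdegA v hv]
    have hNB : ∀ v ∈ B, G.neighborFinset v = A := by
      intro v hv
      apply Finset.eq_of_subset_of_card_le (hsub2 v hv)
      rw [SimpleGraph.card_neighborFinset_eq_degree, hdegB v hv]
    have hadj2 : ∀ u v, G.Adj u v ↔ ((p u ∧ ¬ p v) ∨ (¬ p u ∧ p v)) := by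
      intro u v
      constructor
      · intro h; have := hpadj u v h; tauto
      · rintro (⟨hu, hv⟩ | ⟨hu, hv⟩)
        · have hv' : v ∈ G.neighborFinset u := by
            rw [hNA u (by simp [hA, hu])]
            simp [hB, hv]
          rwa [SimpleGraph.mem_neighborFinset] at hv'
        · have hu' : u ∈ G.neighborFinset v := by
            rw [hNA v (by simp [hA, hv])]
            simp [hB, hu]
          rw [SimpleGraph.mem_neighborFinset] at hu'
          exact hu'.symm
    -- part sizes differ by one
    have h4ab : 4 * (A.card * B.card) = n ^ 2 - 1 := by omega
    have hcase : A.card = B.card + 1 ∨ B.card = A.card + 1 := by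
      have hnp : 1 ≤ n ^ 2 := by omega
      have h4z : 4 * ((A.card : ℤ) * B.card) = (n : ℤ) ^ 2 - 1 := by
        have := h4ab
        zify [hnp] at this
        push_cast at this ⊢
        linarith
      have h2 : ((A.card : ℤ) - B.card) ^ 2 = 1 := by
        linear_combination ((A.card : ℤ) + B.card + n) * habz - h4z
      have h4 : (((A.card : ℤ) - B.card) - 1) * (((A.card : ℤ) - B.card) + 1) = 0 := by
        linear_combination h2
      rcases mul_eq_zero.mp h4 with h | h
      · left; omega
      · right; omega
    have hcardA : Fintype.card {x // p x} = A.card := by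
      rw [Fintype.card_subtype]
    have hcardB : Fintype.card {x // ¬ p x} = B.card := by
      rw [Fintype.card_subtype]
    rcases hcase with hc | hc
    · -- A is bigger: use ¬ p as left part
      apply iso_of_partition_STI G (fun v => ¬ p v)
      · intro u v; rw [hadj2]; tauto
      · rw [hcardB]; omega
      · have hfc : Fintype.card {x // ¬ ¬ p x} = Fintype.card {x // p x} :=
          Fintype.card_congr (Equiv.subtypeEquivRight (fun x => not_not))
        rw [hfc, hcardA]; omega
    · -- B is bigger: use p as left part
      apply iso_of_partition_STI G p hadj2
      · rw [hcardA]; omega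
      · rw [hcardB]; omega
  · rintro ⟨φ⟩
    have hcard : n = (n - 1) / 2 + (n + 1) / 2 := by
      have h := Fintype.card_congr φ.toEquiv
      simpa using h
    set p : V → Prop := fun v => (φ v).isLeft = true with hp
    have hadjb : ∀ u v, G.Adj u v ↔ ((p u ∧ ¬ p v) ∨ (¬ p u ∧ p v)) := by
      intro u v
      rw [← φ.map_adj_iff]
      cases h1 : φ u <;> cases h2 : φ v <;> simp [hp, h1, h2]
    have hedge := edge_count_of_partition_STI G p hadjb
    have hAc : (univ.filter p).card = (n - 1) / 2 := by
      rw [← Fintype.card_subtype]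
      have e : {x // p x} ≃ Fin ((n - 1) / 2) :=
        (Equiv.subtypeEquiv φ.toEquiv (fun v => Iff.rfl)).trans
          (leftEquivSTI (Fin ((n - 1) / 2)) (Fin ((n + 1) / 2)))
      rw [Fintype.card_congr e, Fintype.card_fin]
    have hBc : (univ.filter (fun v => ¬ p v)).card = (n + 1) / 2 := by
      rw [← Fintype.card_subtype]
      have e : {x // ¬ p x} ≃ Fin ((n + 1) / 2) :=
        (Equiv.subtypeEquiv φ.toEquiv (fun v => Iff.rfl)).trans
          (rightEquivSTI (Fin ((n - 1) / 2)) (Fin ((n + 1) / 2)))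
      rw [Fintype.card_congr e, Fintype.card_fin]
    obtain ⟨a, hna, hba, ha2⟩ : ∃ a, n = 2 * a + 1 ∧ (n + 1) / 2 = a + 1 ∧ (n - 1) / 2 = a :=
      ⟨(n - 1) / 2, by omega, by omega, rfl⟩
    have hprod : (univ.filter p).card * (univ.filter (fun v => ¬ p v)).card = a * (a + 1) := by
      rw [hAc, hBc, hba, ha2]
    rw [hprod] at hedge
    have hsq : n ^ 2 = 4 * (a * a) + 4 * a + 1 := by rw [hna]; ring
    have hmul : a * (a + 1) = a * a + a := by ring
    rw [hncard]
    omega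
end

section
/- If G is a stepwise transmission irregular (STI) graph of order n ≥ 5, then 2 ≤ diam(G) ≤ (n − 1)/2; moreover, diam(G) = 2 if and only if G is isomorphic to K_{(n−1)/2,(n+1)/2}, and the hatted cycle G_n satisfies diam(G_n) = (n − 1)/2. -/
open Finset

variable {V : Type*}

/-- The hatted cycle `G_n` on vertices `0, …, n-1` (paper's `v_1, …, v_n`):
vertices `0, …, n-2` induce a cycle of length `n-1`, and vertex `n-1`
is adjacent exactly to vertices `0` and `2`. -/
def hattedCycle (n : ℕ) : SimpleGraph (Fin n) :=
  SimpleGraph.fromRel (fun i j =>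
    (j.val = i.val + 1 ∧ j.val ≤ n - 2) ∨
    (i.val = 0 ∧ j.val = n - 2) ∨
    (i.val = n - 1 ∧ (j.val = 0 ∨ j.val = 2)))

/-- The diameter of a graph: the maximum distance between pairs of vertices. -/
noncomputable def graphDiam [Fintype V] (G : SimpleGraph V) : ℕ :=
  Finset.univ.sup fun v => Finset.univ.sup fun u => G.dist v u

open SimpleGraph

section Generic
variable {W : Type*} {G : SimpleGraph W}

/-- potential bound along a walk -/
lemma abs_sub_le_walk_length (φ : W → ℤ)
    (hφ : ∀ a b, G.Adj a b → |φ a - φ b| ≤ 1) {u v : W} (p : G.Walk u v) :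
    |φ u - φ v| ≤ p.length := by
  induction p with
  | nil => simp
  | @cons a b c h q ih =>
    have := hφ a b h
    have h2 : |φ a - φ c| ≤ |φ a - φ b| + |φ b - φ c| := abs_sub_le _ _ _
    have : |φ a - φ c| ≤ 1 + q.length := by
      refine h2.trans ?_
      exact add_le_add this ih
    simpa [SimpleGraph.Walk.length_cons, add_comm] using this

lemma abs_sub_le_dist (φ : W → ℤ)
    (hφ : ∀ a b, G.Adj a b → |φ a - φ b| ≤ 1) {u v : W} (hr : G.Reachable u v) :
    |φ u - φ v| ≤ G.dist u v := by
  obtain ⟨p, hp⟩ := hr.exists_walk_length_eq_dist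
  rw [← hp]
  exact_mod_cast abs_sub_le_walk_length φ hφ p

/-- color parity along a walk -/
lemma color_walk (c : W → ZMod 2)
    (hc : ∀ a b, G.Adj a b → c b = c a + 1) {u v : W} (p : G.Walk u v) :
    c v = c u + p.length := by
  induction p with
  | nil => simp
  | @cons a b c' h q ih =>
    rw [ih, hc a b h]
    push_cast [SimpleGraph.Walk.length_cons]
    ring

lemma color_dist (c : W → ZMod 2)
    (hc : ∀ a b, G.Adj a b → c b = c a + 1) {u v : W} (hr : G.Reachable u v) :
    c v = c u + G.dist u v := by
  obtain ⟨p, hp⟩ := hr.exists_walk_length_eq_dist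
  rw [← hp]; exact color_walk c hc p

/-- a walk between getVerts -/
lemma exists_walk_getVert {u v : W} (p : G.Walk u v) {i j : ℕ} (hij : i ≤ j)
    (hj : j ≤ p.length) :
    ∃ q : G.Walk (p.getVert i) (p.getVert j), q.length = j - i := by
  induction j, hij using Nat.le_induction with
  | base => exact ⟨SimpleGraph.Walk.nil, by simp⟩
  | succ m him ih =>
    obtain ⟨q, hq⟩ := ih (le_trans (Nat.le_succ m) hj)
    have hadj : G.Adj (p.getVert m) (p.getVert (m+1)) :=
      p.adj_getVert_succ (by omega)
    exact ⟨q.concat hadj, by simp [SimpleGraph.Walk.length_concat, hq]; omega⟩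

lemma dist_getVert_le {u v : W} (p : G.Walk u v) {i j : ℕ} (hij : i ≤ j)
    (hj : j ≤ p.length) : G.dist (p.getVert i) (p.getVert j) ≤ j - i := by
  obtain ⟨q, hq⟩ := exists_walk_getVert p hij hj
  exact hq ▸ SimpleGraph.dist_le q

lemma reachable_getVert {u v : W} (p : G.Walk u v) {i j : ℕ} (hij : i ≤ j)
    (hj : j ≤ p.length) : G.Reachable (p.getVert i) (p.getVert j) := by
  obtain ⟨q, _⟩ := exists_walk_getVert p hij hj
  exact ⟨q⟩

end Generic

section STI
variable [Fintype V] {G : SimpleGraph V}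

/-- the color of a vertex: parity of the transmission -/
noncomputable def gcol (G : SimpleGraph V) (v : V) : ZMod 2 :=
  ((transmission G v : ℕ) : ZMod 2)

lemma zmod2_ne {x y : ZMod 2} (h : x ≠ y) : x = y + 1 := by
  revert h; revert x y; decide

lemma gcol_adj (hSTI : IsSTI G) {u v : V} (h : G.Adj u v) :
    gcol G v = gcol G u + 1 := by
  apply zmod2_ne
  intro hcc
  have h1 := hSTI.2 u v h
  have h2 : ((transmission G u : ℤ) - (transmission G v : ℤ)) = 1 ∨
      ((transmission G u : ℤ) - (transmission G v : ℤ)) = -1 := by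
    rcases Int.natAbs_eq_iff.mp h1 with h | h <;> simp [h]
  have h3 : ((transmission G u : ℕ) : ZMod 2) = ((transmission G v : ℕ) : ZMod 2) := hcc.symm
  have h4 : ((transmission G u : ℤ) : ZMod 2) = ((transmission G v : ℤ) : ZMod 2) := by
    push_cast at h3 ⊢; exact h3
  rcases h2 with h | h <;>
  · have h5 := congrArg (fun z : ℤ => (z : ZMod 2)) h
    simp only [Int.cast_sub, Int.cast_natCast, Int.cast_one, Int.cast_neg] at h5
    rw [h3] at h5
    simp at h5

lemma gcol_dist (hSTI : IsSTI G) (u v : V) :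
    ((G.dist u v : ℕ) : ZMod 2) = gcol G u + gcol G v := by
  have := color_dist (gcol G) (fun a b hab => gcol_adj hSTI hab) (hSTI.1 u v)
  rw [this]
  have h2 : gcol G u + gcol G u = 0 := by
    have : (2 : ZMod 2) = 0 := by decide
    calc gcol G u + gcol G u = 2 * gcol G u := by ring
    _ = 0 := by rw [this]; ring
  rw [← add_assoc, h2, zero_add]

/-- adjacent vertices: distances from any point differ by exactly one -/
lemma dist_adj_ne (hSTI : IsSTI G) {u v : V} (h : G.Adj u v) (x : V) :
    G.dist x u ≠ G.dist x v := by
  intro hd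
  have h1 := gcol_dist hSTI x u
  have h2 := gcol_dist hSTI x v
  rw [hd, h2] at h1
  have : gcol G u = gcol G v := by
    have := add_left_cancel h1
    exact this.symm
  rw [gcol_adj hSTI h] at this
  simp only [left_eq_add] at this
  exact one_ne_zero this

lemma dist_adj_le (hconn : G.Connected) {u v : V} (h : G.Adj u v) (x : V) :
    G.dist x u ≤ G.dist x v + 1 := by
  have := hconn.dist_triangle (u := x) (v := v) (w := u)
  have h1 : G.dist v u ≤ 1 := by
    rw [SimpleGraph.dist_eq_one_iff_adj.mpr h.symm]
  omega

/-- the set of vertices strictly closer to u than to v -/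
noncomputable def closerSet (G : SimpleGraph V) (u v : V) : Finset V :=
  univ.filter (fun x => G.dist x u < G.dist x v)

end STI

section STI2
variable [Fintype V] {G : SimpleGraph V}

lemma dist_adj_pm (hSTI : IsSTI G) {u v : V} (h : G.Adj u v) (x : V) :
    (G.dist x u : ℤ) - G.dist x v = 1 ∨ (G.dist x u : ℤ) - G.dist x v = -1 := by
  have h1 := dist_adj_ne hSTI h x
  have h2 := dist_adj_le hSTI.1 h x
  have h3 := dist_adj_le hSTI.1 h.symm x
  omega

lemma closer_compl (hSTI : IsSTI G) {u v : V} (h : G.Adj u v) :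
    closerSet G v u = univ.filter (fun x => ¬ G.dist x u < G.dist x v) := by
  unfold closerSet
  apply Finset.filter_congr
  intro x _
  have := dist_adj_pm hSTI h x
  constructor <;> intro <;> omega

lemma closer_card_add (hSTI : IsSTI G) {u v : V} (h : G.Adj u v) :
    (closerSet G u v).card + (closerSet G v u).card = Fintype.card V := by
  rw [closer_compl hSTI h]
  unfold closerSet
  rw [Finset.card_filter_add_card_filter_not]
  exact Finset.card_univ

lemma transmission_sub (hSTI : IsSTI G) {u v : V} (h : G.Adj u v) :
    (transmission G u : ℤ) - transmission G v =
      (closerSet G v u).card - (closerSet G u v).card := by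
  have key : (transmission G u : ℤ) - transmission G v =
      ∑ x, ((G.dist x u : ℤ) - G.dist x v) := by
    unfold transmission
    push_cast
    rw [← Finset.sum_sub_distrib]
    apply Finset.sum_congr rfl
    intro x _
    rw [SimpleGraph.dist_comm (G := G) (u := x) (v := u), SimpleGraph.dist_comm (G := G) (u := x) (v := v)]
  rw [key, ← Finset.sum_filter_add_sum_filter_not univ (fun x => G.dist x u < G.dist x v)]
  have A : ∑ x ∈ univ.filter (fun x => G.dist x u < G.dist x v),
      ((G.dist x u : ℤ) - G.dist x v) = -((closerSet G u v).card : ℤ) := by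
    have hA : ∀ x ∈ univ.filter (fun x => G.dist x u < G.dist x v),
        ((G.dist x u : ℤ) - G.dist x v) = -1 := by
      intro x hx
      simp only [Finset.mem_filter] at hx
      have := dist_adj_pm hSTI h x
      omega
    rw [Finset.sum_congr rfl hA, Finset.sum_const]
    simp [closerSet]
  have B : ∑ x ∈ univ.filter (fun x => ¬ G.dist x u < G.dist x v),
      ((G.dist x u : ℤ) - G.dist x v) = ((closerSet G v u).card : ℤ) := by
    have hB : ∀ x ∈ univ.filter (fun x => ¬ G.dist x u < G.dist x v),
        ((G.dist x u : ℤ) - G.dist x v) = 1 := by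
      intro x hx
      simp only [Finset.mem_filter] at hx
      have := dist_adj_pm hSTI h x
      omega
    rw [Finset.sum_congr rfl hB, Finset.sum_const]
    rw [closer_compl hSTI h]
    simp
  rw [A, B]; ring

lemma closer_card_bound (hSTI : IsSTI G) {u v : V} (h : G.Adj u v) :
    2 * (closerSet G u v).card ≤ Fintype.card V + 1 := by
  have h1 := hSTI.2 u v h
  have h2 := transmission_sub hSTI h
  have h3 := closer_card_add hSTI h
  have h4 : ((transmission G u : ℤ) - transmission G v) = 1 ∨
      ((transmission G u : ℤ) - transmission G v) = -1 := by
    rcases Int.natAbs_eq_iff.mp h1 with h | h <;> simp [h]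
  omega

lemma exists_adj (hconn : G.Connected) (h2 : 1 < Fintype.card V) :
    ∃ u v : V, G.Adj u v := by
  obtain ⟨u, v, huv⟩ := Fintype.exists_pair_of_one_lt_card h2
  obtain ⟨p, hp⟩ := (hconn u v).exists_walk_length_eq_dist
  have hl : 0 < p.length := by
    rw [hp]; exact (hconn u v).pos_dist_of_ne huv
  refine ⟨u, p.getVert 1, ?_⟩
  have := p.adj_getVert_succ hl
  simpa using this

lemma odd_card (hSTI : IsSTI G) (h2 : 1 < Fintype.card V) :
    Odd (Fintype.card V) := by
  obtain ⟨u, v, h⟩ := exists_adj hSTI.1 h2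
  have h1 := hSTI.2 u v h
  have h2 := transmission_sub hSTI h
  have h3 := closer_card_add hSTI h
  have h4 : ((transmission G u : ℤ) - transmission G v) = 1 ∨
      ((transmission G u : ℤ) - transmission G v) = -1 := by
    rcases Int.natAbs_eq_iff.mp h1 with h | h <;> simp [h]
  rcases h4 with h4 | h4
  · exact ⟨(closerSet G u v).card, by omega⟩
  · exact ⟨(closerSet G v u).card, by omega⟩

end STI2

section Diam
variable [Fintype V] {G : SimpleGraph V}

lemma dist_le_diam (u v : V) : G.dist u v ≤ graphDiam G := by
  unfold graphDiam
  exact le_trans (Finset.le_sup (f := fun u' => G.dist u u') (mem_univ v))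
    (Finset.le_sup (f := fun v' => univ.sup fun u' => G.dist v' u') (mem_univ u))

lemma exists_diam_pair [Nonempty V] : ∃ u w : V, G.dist u w = graphDiam G := by
  obtain ⟨u, _, hu⟩ := Finset.exists_mem_eq_sup univ univ_nonempty
    (fun v => univ.sup fun u' => G.dist v u')
  obtain ⟨w, _, hw⟩ := Finset.exists_mem_eq_sup univ univ_nonempty
    (fun u' => G.dist u u')
  exact ⟨u, w, by rw [graphDiam, hu, hw]⟩

lemma transmission_of_diam_le_one (hconn : G.Connected) (hd : graphDiam G ≤ 1)
    (u : V) : transmission G u = Fintype.card V - 1 := by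
  classical
  unfold transmission
  rw [Finset.sum_eq_sum_sdiff_singleton_add (mem_univ u) (fun x => G.dist u x)]
  rw [SimpleGraph.dist_self]
  have h1 : ∀ x ∈ univ \ {u}, G.dist u x = 1 := by
    intro x hx
    simp only [Finset.mem_sdiff, Finset.mem_singleton] at hx
    have hpos := (hconn u x).pos_dist_of_ne (Ne.symm hx.2)
    have := dist_le_diam (G := G) u x
    omega
  rw [Finset.sum_congr rfl h1, Finset.sum_const]
  rw [Finset.card_sdiff_of_subset (by simp)]
  simp

lemma two_le_diam (hSTI : IsSTI G) (h5 : 5 ≤ Fintype.card V) :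
    2 ≤ graphDiam G := by
  by_contra hlt
  push_neg at hlt
  have hd1 : graphDiam G ≤ 1 := by omega
  obtain ⟨u, v, huv⟩ := exists_adj hSTI.1 (by omega)
  have h1 := hSTI.2 u v huv
  rw [transmission_of_diam_le_one hSTI.1 hd1 u,
    transmission_of_diam_le_one hSTI.1 hd1 v] at h1
  simp at h1

end Diam

section Geodesic
variable {G : SimpleGraph V}

lemma geodesic_getVert_dist (hconn : G.Connected) {u w : V} (p : G.Walk u w)
    (hp : p.length = G.dist u w) {i j : ℕ} (hij : i ≤ j) (hj : j ≤ p.length) :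
    G.dist (p.getVert i) (p.getVert j) = j - i := by
  have h1 := dist_getVert_le p hij hj
  have h2 := dist_getVert_le p (Nat.zero_le i) (le_trans hij hj)
  have h3 := dist_getVert_le p hj (le_refl p.length)
  rw [p.getVert_zero] at h2
  rw [p.getVert_length] at h3
  have t1 := hconn.dist_triangle (u := u) (v := p.getVert i) (w := w)
  have t2 := hconn.dist_triangle (u := p.getVert i) (v := p.getVert j) (w := w)
  omega

lemma geodesic_dist_start (hconn : G.Connected) {u w : V} (p : G.Walk u w)
    (hp : p.length = G.dist u w) {i : ℕ} (hi : i ≤ p.length) :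
    G.dist u (p.getVert i) = i := by
  have := geodesic_getVert_dist hconn p hp (Nat.zero_le i) hi
  rw [p.getVert_zero] at this
  omega

lemma geodesic_dist_end (hconn : G.Connected) {u w : V} (p : G.Walk u w)
    (hp : p.length = G.dist u w) {i : ℕ} (hi : i ≤ p.length) :
    G.dist (p.getVert i) w = p.length - i := by
  have := geodesic_getVert_dist hconn p hp hi (le_refl p.length)
  rw [p.getVert_length] at this
  omega

end Geodesic

section ExtVertex
variable [Fintype V] {G : SimpleGraph V}

/-- Core lemma: given a diametral geodesic with 2*d = n+1, produce the
"extension" vertex z adjacent to the start, off the path, with explicit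
distances to all path vertices. -/
lemma exists_ext (hSTI : IsSTI G) (h5 : 5 ≤ Fintype.card V) {u w : V}
    (p : G.Walk u w) (hp : p.length = G.dist u w)
    (hlen : 2 * p.length = Fintype.card V + 1) :
    ∃ z : V, G.Adj u z ∧ (∀ i ≤ p.length, z ≠ p.getVert i) ∧
      (∀ i, i ≤ p.length - 1 → G.dist z (p.getVert i) = i + 1) ∧
      G.dist z w = p.length - 1 := by
  classical
  have hconn := hSTI.1
  set n := Fintype.card V with hn
  set d := p.length with hd
  have hd3 : 3 ≤ d := by omega
  -- Step 1: find z
  have hz : ∃ z : V, G.Adj u z ∧ z ≠ p.getVert 1 := by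
    by_contra hno
    push_neg at hno
    have hclose : ∀ y : V, y ≠ u → G.dist y (p.getVert 1) < G.dist y u := by
      intro y hy
      obtain ⟨q, hq⟩ := (hconn y u).exists_walk_length_eq_dist
      have hL : 0 < q.length := by
        rw [hq]; exact (hconn y u).pos_dist_of_ne hy
      have hadj := q.adj_getVert_succ (show q.length - 1 < q.length by omega)
      have heq1 : q.length - 1 + 1 = q.length := by omega
      rw [heq1, q.getVert_length] at hadj
      have hm : q.getVert (q.length - 1) = p.getVert 1 := hno _ hadj.symm
      have hle := dist_getVert_le q (Nat.zero_le (q.length - 1)) (by omega)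
      rw [q.getVert_zero, hm] at hle
      omega
    have hsub : univ.erase u ⊆ closerSet G (p.getVert 1) u := by
      intro y hy
      simp only [Finset.mem_erase] at hy
      simp only [closerSet, Finset.mem_filter, Finset.mem_univ, true_and]
      exact hclose y hy.1
    have hcard := Finset.card_le_card hsub
    rw [Finset.card_erase_of_mem (mem_univ u), Finset.card_univ] at hcard
    have hadj0 := p.adj_getVert_succ (show 0 < p.length by omega)
    rw [p.getVert_zero] at hadj0
    norm_num at hadj0
    have hb := closer_card_bound hSTI hadj0.symm
    omega
  obtain ⟨z, hzadj, hz1⟩ := hz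
  -- distances from u along the path
  have hdu : ∀ i ≤ d, G.dist u (p.getVert i) = i :=
    fun i hi => geodesic_dist_start hconn p hp hi
  have hduz : G.dist u z = 1 := SimpleGraph.dist_eq_one_iff_adj.mpr hzadj
  -- Step 2: z off the path
  have hoff : ∀ i ≤ d, z ≠ p.getVert i := by
    intro i hi heq
    have := hdu i hi
    rw [← heq, hduz] at this
    subst this
    exact hz1 heq
  -- the path-prefix set is exactly the closer set of the last edge
  have hadjlast : G.Adj (p.getVert (d - 1)) w := by
    have := p.adj_getVert_succ (show d - 1 < p.length by omega)
    have h2 : d - 1 + 1 = d := by omega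
    rw [h2] at this
    rwa [show p.getVert d = w from p.getVert_length] at this
  have hPcard : (Finset.image p.getVert (Finset.range (d + 1))).card = d + 1 := by
    rw [Finset.card_image_of_injOn, Finset.card_range]
    intro a ha b hb hab
    simp only [Finset.mem_coe, Finset.mem_range] at ha hb
    have h1 := hdu a (by omega)
    have h2 := hdu b (by omega)
    rw [hab] at h1
    omega
  have hBsub : Finset.image p.getVert (Finset.range d) ⊆ closerSet G (p.getVert (d-1)) w := by
    intro y hy
    simp only [Finset.mem_image, Finset.mem_range] at hy
    obtain ⟨i, hi, rfl⟩ := hy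
    simp only [closerSet, Finset.mem_filter, Finset.mem_univ, true_and]
    have e1 := geodesic_getVert_dist hconn p hp (show i ≤ d - 1 by omega) (by omega)
    have e2 := geodesic_dist_end hconn p hp (show i ≤ p.length by omega)
    rw [e1, e2]
    omega
  have hBcard : (Finset.image p.getVert (Finset.range d)).card = d := by
    rw [Finset.card_image_of_injOn, Finset.card_range]
    intro a ha b hb hab
    simp only [Finset.mem_coe, Finset.mem_range] at ha hb
    have h1 := hdu a (by omega)
    have h2 := hdu b (by omega)
    rw [hab] at h1
    omega
  have hBbound := closer_card_bound hSTI hadjlast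
  have hBeq : closerSet G (p.getVert (d-1)) w = Finset.image p.getVert (Finset.range d) := by
    symm
    apply Finset.eq_of_subset_of_card_le hBsub
    have := Finset.card_le_card hBsub
    omega
  -- z not in B
  have hzB : ¬ G.dist z (p.getVert (d-1)) < G.dist z w := by
    intro hlt
    have : z ∈ closerSet G (p.getVert (d-1)) w := by
      simp only [closerSet, Finset.mem_filter, Finset.mem_univ, true_and]
      exact hlt
    rw [hBeq] at this
    simp only [Finset.mem_image, Finset.mem_range] at this
    obtain ⟨i, hi, heq⟩ := this
    exact hoff i (by omega) heq.symm
  -- dist z w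
  have hne1 : G.dist z (p.getVert (d-1)) ≠ G.dist z w := dist_adj_ne hSTI hadjlast z
  have hzxd1 : G.dist z (p.getVert (d-1)) ≤ d := by
    have t := hconn.dist_triangle (u := z) (v := u) (w := p.getVert (d-1))
    have := hdu (d-1) (by omega)
    rw [SimpleGraph.dist_comm (G := G) (u := z) (v := u), hduz] at t
    omega
  have hzwlow : d ≤ 1 + G.dist z w := by
    have t := hconn.dist_triangle (u := u) (v := z) (w := w)
    rw [← hp] at t
    omega
  have hzw : G.dist z w = d - 1 := by omega
  have hzd1 : G.dist z (p.getVert (d-1)) = d := by omega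
  -- Step 4: induction
  have hCstep : ∀ i, i ≤ d - 1 → G.dist z (p.getVert i) = i + 1 := by
    intro i
    induction i with
    | zero => intro _; rw [p.getVert_zero, SimpleGraph.dist_comm, hduz]
    | succ m ih =>
      intro hm
      have hprev := ih (by omega)
      have hadjm : G.Adj (p.getVert m) (p.getVert (m+1)) :=
        p.adj_getVert_succ (by omega)
      have hpm := dist_adj_pm hSTI hadjm.symm z
      have hcases : G.dist z (p.getVert (m+1)) = m ∨ G.dist z (p.getVert (m+1)) = m + 2 := by
        omega
      rcases hcases with hc | hc
      · exfalso
        have t := hconn.dist_triangle (u := z) (v := p.getVert (m+1)) (w := p.getVert (d-1))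
        have e := geodesic_getVert_dist hconn p hp (show m + 1 ≤ d - 1 from hm) (by omega)
        rw [hc, e, hzd1] at t
        omega
      · exact hc
  exact ⟨z, hzadj, hoff, hCstep, hzw⟩

end ExtVertex

section DiamUpper
variable [Fintype V] {G : SimpleGraph V}

lemma two_len_le (hSTI : IsSTI G) {u w : V} (p : G.Walk u w)
    (hp : p.length = G.dist u w) (h1 : 1 ≤ p.length) :
    2 * p.length ≤ Fintype.card V + 1 := by
  classical
  have hconn := hSTI.1
  have hadjlast : G.Adj (p.getVert (p.length - 1)) w := by
    have h := p.adj_getVert_succ (show p.length - 1 < p.length by omega)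
    have h2 : p.length - 1 + 1 = p.length := by omega
    rw [h2] at h
    rwa [show p.getVert p.length = w from p.getVert_length] at h
  have hBsub : Finset.image p.getVert (Finset.range p.length) ⊆
      closerSet G (p.getVert (p.length - 1)) w := by
    intro y hy
    simp only [Finset.mem_image, Finset.mem_range] at hy
    obtain ⟨i, hi, rfl⟩ := hy
    simp only [closerSet, Finset.mem_filter, Finset.mem_univ, true_and]
    have e1 := geodesic_getVert_dist hconn p hp (show i ≤ p.length - 1 by omega) (by omega)
    have e2 := geodesic_dist_end hconn p hp (show i ≤ p.length by omega)
    rw [e1, e2]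
    omega
  have hBcard : (Finset.image p.getVert (Finset.range p.length)).card = p.length := by
    rw [Finset.card_image_of_injOn, Finset.card_range]
    intro a ha b hb hab
    simp only [Finset.mem_coe, Finset.mem_range] at ha hb
    have h1 := geodesic_dist_start hconn p hp (show a ≤ p.length by omega)
    have h2 := geodesic_dist_start hconn p hp (show b ≤ p.length by omega)
    rw [hab] at h1
    omega
  have hb := closer_card_bound hSTI hadjlast
  have hc := Finset.card_le_card hBsub
  omega

lemma diam_upper (hSTI : IsSTI G) (h5 : 5 ≤ Fintype.card V) :
    2 * graphDiam G ≤ Fintype.card V - 1 := by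
  classical
  have hconn := hSTI.1
  by_contra hcon
  push_neg at hcon
  obtain ⟨k, hk⟩ := odd_card hSTI (by omega)
  have hNE : Nonempty V := by
    have : 0 < Fintype.card V := by omega
    exact Fintype.card_pos_iff.mp this
  obtain ⟨u, w, huw⟩ := exists_diam_pair (G := G)
  have hd2 : 2 ≤ graphDiam G := two_le_diam hSTI h5
  obtain ⟨p, hp⟩ := (hconn u w).exists_walk_length_eq_dist
  have hplen : p.length = graphDiam G := by rw [hp, huw]
  have hle := two_len_le hSTI p hp (by omega)
  -- 2 * p.length = n + 1
  have hlen : 2 * p.length = Fintype.card V + 1 := by omega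
  have hd3 : 3 ≤ p.length := by omega
  -- extension vertex at u
  obtain ⟨z, hzadj, hzoff, hzC, hzw⟩ := exists_ext hSTI h5 p hp hlen
  -- extension vertex at w (via the reversed walk)
  have hprev : p.reverse.length = G.dist w u := by
    rw [SimpleGraph.Walk.length_reverse, SimpleGraph.dist_comm (G := G) (u := w) (v := u), hp]
  have hlenrev : 2 * p.reverse.length = Fintype.card V + 1 := by
    rw [SimpleGraph.Walk.length_reverse]; exact hlen
  obtain ⟨w', hwadj, hwoff, hwC, hwu⟩ := exists_ext hSTI h5 p.reverse hprev hlenrev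
  rw [SimpleGraph.Walk.length_reverse] at hwu
  -- translate reverse getVerts
  have hrev : ∀ j ≤ p.length, p.reverse.getVert (p.length - j) = p.getVert j := by
    intro j hj
    rw [SimpleGraph.Walk.getVert_reverse]
    congr 1
    omega
  have hwoff' : ∀ j ≤ p.length, w' ≠ p.getVert j := by
    intro j hj
    have := hwoff (p.length - j) (by rw [SimpleGraph.Walk.length_reverse]; omega)
    rwa [hrev j hj] at this
  have hwC' : ∀ j, 1 ≤ j → j ≤ p.length → G.dist w' (p.getVert j) = p.length - j + 1 := by
    intro j hj1 hj2
    have := hwC (p.length - j) (by rw [SimpleGraph.Walk.length_reverse]; omega)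
    rwa [hrev j hj2] at this
  -- the closer set of edge (w, w') is exactly {x_1, ..., x_d}
  have hC2sub : Finset.image (fun t => p.getVert (t + 1)) (Finset.range p.length) ⊆
      closerSet G w w' := by
    intro y hy
    simp only [Finset.mem_image, Finset.mem_range] at hy
    obtain ⟨t, ht, rfl⟩ := hy
    simp only [closerSet, Finset.mem_filter, Finset.mem_univ, true_and]
    have e1 := geodesic_dist_end hconn p hp (show t + 1 ≤ p.length by omega)
    have e2 := hwC' (t + 1) (by omega) (by omega)
    rw [SimpleGraph.dist_comm (G := G) (u := w') (v := p.getVert (t+1))] at e2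
    rw [e1, e2]
    omega
  have hC2card : (Finset.image (fun t => p.getVert (t + 1)) (Finset.range p.length)).card
      = p.length := by
    rw [Finset.card_image_of_injOn, Finset.card_range]
    intro a ha b hb hab
    simp only [Finset.mem_coe, Finset.mem_range] at ha hb
    have h1 := geodesic_dist_start hconn p hp (show a + 1 ≤ p.length by omega)
    have h2 := geodesic_dist_start hconn p hp (show b + 1 ≤ p.length by omega)
    simp only at hab
    rw [hab] at h1
    omega
  have hC2bound := closer_card_bound hSTI hwadj
  have hC2le := Finset.card_le_card hC2sub
  have hC2eq : closerSet G w w' = Finset.image (fun t => p.getVert (t + 1))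
      (Finset.range p.length) := by
    symm
    apply Finset.eq_of_subset_of_card_le hC2sub
    omega
  -- z is not closer to w, so dist z w' ≤ dist z w = d - 1
  have hzw' : ¬ G.dist z w < G.dist z w' := by
    intro hlt
    have hzmem : z ∈ closerSet G w w' := by
      simp only [closerSet, Finset.mem_filter, Finset.mem_univ, true_and]
      exact hlt
    rw [hC2eq] at hzmem
    simp only [Finset.mem_image, Finset.mem_range] at hzmem
    obtain ⟨t, ht, heq⟩ := hzmem
    exact hzoff (t + 1) (by omega) heq.symm
  -- parity: dist z w' ≠ d - 1
  have hpar : G.dist z w' ≠ p.length - 1 := by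
    intro heq
    have g1 := gcol_dist hSTI z w'
    have g2 := gcol_adj hSTI hzadj
    have g3 := gcol_adj hSTI hwadj
    have g4 := gcol_dist hSTI u w
    rw [heq] at g1
    rw [← hp] at g4
    have hx : ((p.length - 1 : ℕ) : ZMod 2) = ((p.length : ℕ) : ZMod 2) := by
      rw [g1, g2, g3, g4]
      rw [show (gcol G u + 1 + (gcol G w + 1)) = gcol G u + gcol G w + (1 + 1) by ring,
          show ((1 : ZMod 2) + 1) = 0 by decide, add_zero]
    have hy : ((p.length : ℕ) : ZMod 2) = ((p.length - 1 : ℕ) : ZMod 2) + 1 := by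
      rw [show p.length = (p.length - 1) + 1 by omega]
      push_cast
      ring
    rw [hy] at hx
    simp only [left_eq_add] at hx
    exact one_ne_zero hx
  have hzwle : G.dist z w' ≤ p.length - 2 := by
    have := hzw
    omega
  have hzwlow : p.length - 2 ≤ G.dist z w' := by
    have t1 := hconn.dist_triangle (u := u) (v := w') (w := w)
    have t2 := hconn.dist_triangle (u := u) (v := z) (w := w')
    have e1 : G.dist w' w = 1 := by
      rw [SimpleGraph.dist_comm (G := G) (u := w') (v := w)]
      exact SimpleGraph.dist_eq_one_iff_adj.mpr hwadj
    have e2 : G.dist u z = 1 := SimpleGraph.dist_eq_one_iff_adj.mpr hzadj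
    rw [← hp] at t1
    omega
  have hzweq : G.dist z w' = p.length - 2 := by omega
  -- geodesic from z to w'
  obtain ⟨q, hq⟩ := (hconn z w').exists_walk_length_eq_dist
  have hqlen : q.length = p.length - 2 := by rw [hq, hzweq]
  -- the two vertex sets
  have hQcard : (Finset.image q.getVert (Finset.range (p.length - 1))).card
      = p.length - 1 := by
    rw [Finset.card_image_of_injOn, Finset.card_range]
    intro a ha b hb hab
    simp only [Finset.mem_coe, Finset.mem_range] at ha hb
    have h1 := geodesic_dist_start hconn q hq (show a ≤ q.length by omega)
    have h2 := geodesic_dist_start hconn q hq (show b ≤ q.length by omega)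
    rw [hab] at h1
    omega
  have hPcard : (Finset.image p.getVert (Finset.range (p.length + 1))).card
      = p.length + 1 := by
    rw [Finset.card_image_of_injOn, Finset.card_range]
    intro a ha b hb hab
    simp only [Finset.mem_coe, Finset.mem_range] at ha hb
    have h1 := geodesic_dist_start hconn p hp (show a ≤ p.length by omega)
    have h2 := geodesic_dist_start hconn p hp (show b ≤ p.length by omega)
    rw [hab] at h1
    omega
  have hdisj : Disjoint (Finset.image p.getVert (Finset.range (p.length + 1)))
      (Finset.image q.getVert (Finset.range (p.length - 1))) := by
    rw [Finset.disjoint_left]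
    intro y hyP hyQ
    simp only [Finset.mem_image, Finset.mem_range] at hyP hyQ
    obtain ⟨i, hi, rfl⟩ := hyP
    obtain ⟨t, ht, heq⟩ := hyQ
    have hdzq := geodesic_dist_start hconn q hq (show t ≤ q.length by omega)
    rw [heq] at hdzq
    have hdqw := geodesic_dist_end hconn q hq (show t ≤ q.length by omega)
    rw [heq, hqlen] at hdqw
    by_cases hcase : i ≤ p.length - 1
    · have h1 := hzC i hcase
      rw [hdzq] at h1
      by_cases hc0 : i = 0
      · subst hc0
        rw [show p.getVert 0 = u from p.getVert_zero] at hdqw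
        rw [SimpleGraph.dist_comm (G := G) (u := u) (v := w')] at hdqw
        rw [hwu] at hdqw
        omega
      · have h2 := hwC' i (by omega) (by omega)
        rw [SimpleGraph.dist_comm (G := G) (u := w') (v := p.getVert i)] at h2
        rw [hdqw] at h2
        omega
    · have hieq : i = p.length := by omega
      subst hieq
      rw [show p.getVert p.length = w from p.getVert_length] at hdzq
      rw [hzw] at hdzq
      omega
  have hcardle := Finset.card_le_univ
    ((Finset.image p.getVert (Finset.range (p.length + 1))) ∪
     (Finset.image q.getVert (Finset.range (p.length - 1))))
  rw [Finset.card_union_of_disjoint hdisj, hPcard, hQcard] at hcardle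
  omega

end DiamUpper

section Bip
variable [Fintype V] {G : SimpleGraph V}

lemma zmod2_cases (x : ZMod 2) : x = 0 ∨ x = 1 := by revert x; decide

lemma adj_iff_gcol (hSTI : IsSTI G) (hdiam : graphDiam G = 2) (u v : V) :
    G.Adj u v ↔ gcol G u ≠ gcol G v := by
  constructor
  · intro h
    rw [gcol_adj hSTI h]
    intro h'
    simp only [left_eq_add] at h'
    exact one_ne_zero h'
  · intro hc
    have hne : u ≠ v := fun h => hc (h ▸ rfl)
    have hd := (hSTI.1 u v).pos_dist_of_ne hne
    have hle : G.dist u v ≤ 2 := hdiam ▸ dist_le_diam u v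
    by_cases h1 : G.dist u v = 1
    · exact SimpleGraph.dist_eq_one_iff_adj.mp h1
    · exfalso
      have h2 : G.dist u v = 2 := by omega
      obtain ⟨p, hp⟩ := (hSTI.1 u v).exists_walk_length_eq_dist
      have hp2 : p.length = 2 := by rw [hp, h2]
      have ha1 := p.adj_getVert_succ (show 0 < p.length by omega)
      have ha2 := p.adj_getVert_succ (show 1 < p.length by omega)
      rw [p.getVert_zero] at ha1
      norm_num at ha1 ha2
      have hv2 : p.getVert 2 = v := by
        rw [← hp2]; exact p.getVert_length
      rw [hv2] at ha2
      have g1 := gcol_adj hSTI ha1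
      have g2 := gcol_adj hSTI ha2
      apply hc
      rw [g2, g1, add_assoc, show ((1 : ZMod 2) + 1) = 0 by decide, add_zero]

lemma dist_eq_two_of_same_gcol (hSTI : IsSTI G) (hdiam : graphDiam G = 2) {u v : V}
    (hne : u ≠ v) (hc : gcol G u = gcol G v) : G.dist u v = 2 := by
  have hd := (hSTI.1 u v).pos_dist_of_ne hne
  have hle : G.dist u v ≤ 2 := hdiam ▸ dist_le_diam u v
  have hnadj : ¬ G.Adj u v := by
    rw [adj_iff_gcol hSTI hdiam]
    simp [hc]
  have h1 : G.dist u v ≠ 1 := fun h => hnadj (SimpleGraph.dist_eq_one_iff_adj.mp h)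
  omega

lemma closer_eq_class [DecidableEq V] (hSTI : IsSTI G) (hdiam : graphDiam G = 2) {u v : V}
    (h : G.Adj u v) :
    closerSet G u v = insert u ((univ.filter (fun x => gcol G x = gcol G v)).erase v) := by
  classical
  have hcc : gcol G u ≠ gcol G v := (adj_iff_gcol hSTI hdiam u v).mp h
  ext x
  simp only [closerSet, Finset.mem_filter, Finset.mem_univ, true_and, Finset.mem_insert,
    Finset.mem_erase]
  by_cases hxu : x = u
  · subst hxu
    simp only [SimpleGraph.dist_self]
    have : G.dist x v = 1 := SimpleGraph.dist_eq_one_iff_adj.mpr h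
    simp [this]
  · simp only [hxu, false_or]
    by_cases hcx : gcol G x = gcol G v
    · by_cases hxv : x = v
      · subst hxv
        simp only [ne_eq, not_true_eq_false, false_and, iff_false, not_lt]
        have : G.dist x u = 1 := SimpleGraph.dist_eq_one_iff_adj.mpr h.symm
        rw [SimpleGraph.dist_self, this]
        omega
      · have hd1 : G.dist x u = 1 := by
          rw [SimpleGraph.dist_eq_one_iff_adj, adj_iff_gcol hSTI hdiam, hcx]
          exact fun h' => hcc h'.symm
        have hd2 : G.dist x v = 2 := dist_eq_two_of_same_gcol hSTI hdiam hxv hcx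
        rw [hd1, hd2]
        simp [hxv, hcx]
    · have hcxu : gcol G x = gcol G u := by
        have h1 := zmod2_cases (gcol G x)
        have h2 := zmod2_cases (gcol G u)
        have h3 := zmod2_cases (gcol G v)
        rcases h1 with h1 | h1 <;> rcases h2 with h2 | h2 <;> rcases h3 with h3 | h3 <;>
          simp_all
      have hxv : x ≠ v := fun h' => hcx (h' ▸ rfl)
      have hd1 : G.dist x v = 1 := by
        rw [SimpleGraph.dist_eq_one_iff_adj, adj_iff_gcol hSTI hdiam]
        exact hcx
      have hd2 : G.dist x u = 2 := dist_eq_two_of_same_gcol hSTI hdiam hxu hcxu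
      rw [hd1, hd2]
      simp [hcx]

lemma closer_card_class [DecidableEq V] (hSTI : IsSTI G) (hdiam : graphDiam G = 2) {u v : V}
    (h : G.Adj u v) :
    (closerSet G u v).card = (univ.filter (fun x => gcol G x = gcol G v)).card := by
  classical
  have hcc : gcol G u ≠ gcol G v := (adj_iff_gcol hSTI hdiam u v).mp h
  rw [closer_eq_class hSTI hdiam h]
  rw [Finset.card_insert_of_notMem (by
    simp only [Finset.mem_erase, Finset.mem_filter, Finset.mem_univ, true_and]
    exact fun h' => hcc h'.2)]
  rw [Finset.card_erase_of_mem (by simp)]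
  have : v ∈ univ.filter (fun x => gcol G x = gcol G v) := by simp
  have := Finset.card_pos.mpr ⟨v, this⟩
  omega

lemma class_card (hSTI : IsSTI G) (hdiam : graphDiam G = 2) (h5 : 5 ≤ Fintype.card V) :
    ((univ.filter (fun x => gcol G x = 0)).card +
       (univ.filter (fun x => gcol G x = 1)).card = Fintype.card V) ∧
    (((univ.filter (fun x => gcol G x = 0)).card : ℤ) -
       ((univ.filter (fun x => gcol G x = 1)).card : ℤ)).natAbs = 1 := by
  classical
  obtain ⟨u, v, h⟩ := exists_adj hSTI.1 (by omega)
  have hcc : gcol G u ≠ gcol G v := (adj_iff_gcol hSTI hdiam u v).mp h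
  have hfil : (univ.filter (fun a => ¬ gcol G a = 0)) =
      (univ.filter (fun x => gcol G x = 1)) := by
    apply Finset.filter_congr
    intro x _
    rcases zmod2_cases (gcol G x) with h' | h' <;> simp [h']
  have h0 : (univ.filter (fun x => gcol G x = 0)).card +
      (univ.filter (fun a => ¬ gcol G a = 0)).card = Fintype.card V := by
    rw [Finset.card_filter_add_card_filter_not]
    exact Finset.card_univ
  rw [hfil] at h0
  refine ⟨h0, ?_⟩
  have h1 := hSTI.2 u v h
  have h2 := transmission_sub hSTI h
  have hc1 := closer_card_class hSTI hdiam h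
  have hc2 := closer_card_class hSTI hdiam h.symm
  rw [hc1, hc2] at h2
  rw [h2] at h1
  rcases zmod2_cases (gcol G u) with hu0 | hu0 <;>
    rcases zmod2_cases (gcol G v) with hv0 | hv0
  · exact absurd (hu0.trans hv0.symm) hcc
  · have e1 : univ.filter (fun x => gcol G x = gcol G u) =
        univ.filter (fun x => gcol G x = 0) := by
      apply Finset.filter_congr; intro x _; rw [hu0]
    have e2 : univ.filter (fun x => gcol G x = gcol G v) =
        univ.filter (fun x => gcol G x = 1) := by
      apply Finset.filter_congr; intro x _; rw [hv0]
    rw [e1, e2] at h1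
    omega
  · have e1 : univ.filter (fun x => gcol G x = gcol G u) =
        univ.filter (fun x => gcol G x = 1) := by
      apply Finset.filter_congr; intro x _; rw [hu0]
    have e2 : univ.filter (fun x => gcol G x = gcol G v) =
        univ.filter (fun x => gcol G x = 0) := by
      apply Finset.filter_congr; intro x _; rw [hv0]
    rw [e1, e2] at h1
    omega
  · exact absurd (hu0.trans hv0.symm) hcc

lemma build_iso {a b : ℕ} (q : V → Prop) [DecidablePred q]
    (hq : ∀ u v, G.Adj u v ↔ ¬(q u ↔ q v))
    (ha : (univ.filter (fun v => q v)).card = a)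
    (hb : (univ.filter (fun v => ¬ q v)).card = b) :
    Nonempty (G ≃g completeBipartiteGraph (Fin a) (Fin b)) := by
  classical
  have e1 : {v // q v} ≃ Fin a :=
    Fintype.equivFinOfCardEq (by rw [Fintype.card_subtype]; exact ha)
  have e2 : {v // ¬ q v} ≃ Fin b :=
    Fintype.equivFinOfCardEq (by rw [Fintype.card_subtype]; exact hb)
  let e : V ≃ (Fin a ⊕ Fin b) := (Equiv.sumCompl q).symm.trans (Equiv.sumCongr e1 e2)
  refine ⟨⟨e, ?_⟩⟩
  intro u v
  show (completeBipartiteGraph (Fin a) (Fin b)).Adj (e u) (e v) ↔ G.Adj u v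
  rw [hq]
  by_cases hu : q u <;> by_cases hv : q v <;>
    simp [e, Equiv.sumCompl_symm_apply_of_pos, Equiv.sumCompl_symm_apply_of_neg,
      hu, hv]

lemma diam_two_iso (hSTI : IsSTI G) (h5 : 5 ≤ Fintype.card V)
    (hdiam : graphDiam G = 2) :
    Nonempty (G ≃g completeBipartiteGraph (Fin ((Fintype.card V - 1) / 2))
      (Fin ((Fintype.card V + 1) / 2))) := by
  classical
  obtain ⟨hsum, hdiff⟩ := class_card hSTI hdiam h5
  have hadj : ∀ u v, G.Adj u v ↔ ¬((gcol G u = 0) ↔ (gcol G v = 0)) := by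
    intro u v
    rw [adj_iff_gcol hSTI hdiam]
    have : ∀ x y : ZMod 2, (x ≠ y) ↔ ¬((x = 0) ↔ (y = 0)) := by decide
    rw [this]
  have hfil0 : (univ.filter (fun v => ¬ gcol G v = 0)) =
      (univ.filter (fun v => gcol G v = 1)) := by
    apply Finset.filter_congr
    intro x _
    rcases zmod2_cases (gcol G x) with h' | h' <;> simp [h']
  by_cases hA : (univ.filter (fun x => gcol G x = 0)).card = (Fintype.card V - 1) / 2
  · apply build_iso (fun v => gcol G v = 0) hadj hA
    rw [hfil0]
    omega
  · have hA' : (univ.filter (fun x => gcol G x = 1)).card = (Fintype.card V - 1) / 2 := by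
      omega
    have hadj' : ∀ u v, G.Adj u v ↔ ¬((gcol G u = 1) ↔ (gcol G v = 1)) := by
      intro u v
      rw [adj_iff_gcol hSTI hdiam]
      have : ∀ x y : ZMod 2, (x ≠ y) ↔ ¬((x = 1) ↔ (y = 1)) := by decide
      rw [this]
    apply build_iso (fun v => gcol G v = 1) hadj' hA'
    have hfil1 : (univ.filter (fun v => ¬ gcol G v = 1)) =
        (univ.filter (fun v => gcol G v = 0)) := by
      apply Finset.filter_congr
      intro x _
      rcases zmod2_cases (gcol G x) with h' | h' <;> simp [h']
    rw [hfil1]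
    omega

end Bip

section IsoDiam
variable {W : Type*} {G : SimpleGraph V} {H : SimpleGraph W}

lemma iso_dist_le (e : G ≃g H) (u v : V) : H.dist (e u) (e v) ≤ G.dist u v := by
  by_cases hr : G.Reachable u v
  · obtain ⟨p, hp⟩ := hr.exists_walk_length_eq_dist
    calc H.dist (e u) (e v) ≤ (p.map e.toHom).length := SimpleGraph.dist_le _
      _ = p.length := by simp
      _ = G.dist u v := hp
  · have hr' : ¬ H.Reachable (e u) (e v) := by
      intro ⟨q⟩
      exact hr ⟨(q.map e.symm.toHom).copy (by simp) (by simp)⟩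
    rw [SimpleGraph.dist_eq_zero_of_not_reachable hr,
      SimpleGraph.dist_eq_zero_of_not_reachable hr']

lemma iso_dist_eq (e : G ≃g H) (u v : V) : H.dist (e u) (e v) = G.dist u v := by
  refine le_antisymm (iso_dist_le e u v) ?_
  have := iso_dist_le e.symm (e u) (e v)
  simpa using this

lemma iso_diam_eq [Fintype V] [Fintype W] [Nonempty V] (e : G ≃g H) :
    graphDiam G = graphDiam H := by
  have : Nonempty W := ⟨e (Classical.arbitrary V)⟩
  apply le_antisymm
  · obtain ⟨u, w, huw⟩ := exists_diam_pair (G := G)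
    rw [← huw, ← iso_dist_eq e u w]
    exact dist_le_diam _ _
  · obtain ⟨u, w, huw⟩ := exists_diam_pair (G := H)
    rw [← huw, ← iso_dist_eq e.symm u w]
    exact dist_le_diam _ _

end IsoDiam

section CBG

lemma cbg_dist_le_two {a b : ℕ} (ha : 1 ≤ a) (hb : 1 ≤ b)
    (x y : Fin a ⊕ Fin b) :
    (completeBipartiteGraph (Fin a) (Fin b)).dist x y ≤ 2 := by
  set K := completeBipartiteGraph (Fin a) (Fin b)
  by_cases hxy : x = y
  · subst hxy; rw [SimpleGraph.dist_self]; omega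
  by_cases hadj : K.Adj x y
  · rw [SimpleGraph.dist_eq_one_iff_adj.mpr hadj]; omega
  · -- same side
    have hmid : ∃ m, K.Adj x m ∧ K.Adj m y := by
      rcases x with i | i <;> rcases y with j | j
      · exact ⟨Sum.inr ⟨0, by omega⟩, by simp [K], by simp [K]⟩
      · exact absurd (by simp [K]) hadj
      · exact absurd (by simp [K]) hadj
      · exact ⟨Sum.inl ⟨0, by omega⟩, by simp [K], by simp [K]⟩
    obtain ⟨m, h1, h2⟩ := hmid
    have : K.dist x y ≤ 2 := by
      have := SimpleGraph.dist_le (SimpleGraph.Walk.cons h1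
        (SimpleGraph.Walk.cons h2 SimpleGraph.Walk.nil))
      simpa using this
    exact this

lemma cbg_diam {a b : ℕ} (ha : 2 ≤ a) (hb : 2 ≤ b) :
    graphDiam (completeBipartiteGraph (Fin a) (Fin b)) = 2 := by
  set K := completeBipartiteGraph (Fin a) (Fin b) with hK
  apply le_antisymm
  · apply Finset.sup_le
    intro x _
    apply Finset.sup_le
    intro y _
    exact cbg_dist_le_two (by omega) (by omega) x y
  · set x : Fin a ⊕ Fin b := Sum.inl ⟨0, by omega⟩
    set y : Fin a ⊕ Fin b := Sum.inl ⟨1, by omega⟩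
    have hxy : x ≠ y := by simp [x, y, Fin.ext_iff]
    have hnadj : ¬ K.Adj x y := by simp [K, x, y]
    have hreach : K.Reachable x y := by
      refine ⟨SimpleGraph.Walk.cons (v := Sum.inr ⟨0, by omega⟩) ?_
        (SimpleGraph.Walk.cons ?_ SimpleGraph.Walk.nil)⟩ <;> simp [K, x, y]
    have h0 : K.dist x y ≠ 0 := fun h => hxy (hreach.dist_eq_zero_iff.mp h)
    have h1 : K.dist x y ≠ 1 := fun h =>
      hnadj (SimpleGraph.dist_eq_one_iff_adj.mp h)
    have := dist_le_diam (G := K) x y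
    omega

end CBG

section Hatted
variable {n : ℕ}

lemma hc_adj_succ (h5 : 5 ≤ n) {a : ℕ} (h : a + 1 ≤ n - 2) :
    (hattedCycle n).Adj ⟨a, by omega⟩ ⟨a + 1, by omega⟩ := by
  rw [hattedCycle, SimpleGraph.fromRel_adj]
  refine ⟨?_, Or.inl (Or.inl ⟨rfl, h⟩)⟩
  intro hh
  have := congrArg Fin.val hh
  simp only at this
  omega

lemma hc_adj_wrap (h5 : 5 ≤ n) :
    (hattedCycle n).Adj ⟨0, by omega⟩ ⟨n - 2, by omega⟩ := by
  rw [hattedCycle, SimpleGraph.fromRel_adj]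
  refine ⟨?_, Or.inl (Or.inr (Or.inl ⟨rfl, rfl⟩))⟩
  intro hh
  have := congrArg Fin.val hh
  simp only at this
  omega

lemma hc_adj_hat0 (h5 : 5 ≤ n) :
    (hattedCycle n).Adj ⟨n - 1, by omega⟩ ⟨0, by omega⟩ := by
  rw [hattedCycle, SimpleGraph.fromRel_adj]
  refine ⟨?_, Or.inl (Or.inr (Or.inr ⟨rfl, Or.inl rfl⟩))⟩
  intro hh
  have := congrArg Fin.val hh
  simp only at this
  omega

lemma hc_adj_hat2 (h5 : 5 ≤ n) :
    (hattedCycle n).Adj ⟨n - 1, by omega⟩ ⟨2, by omega⟩ := by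
  rw [hattedCycle, SimpleGraph.fromRel_adj]
  refine ⟨?_, Or.inl (Or.inr (Or.inr ⟨rfl, Or.inr rfl⟩))⟩
  intro hh
  have := congrArg Fin.val hh
  simp only at this
  omega

lemma hc_walk_fwd (h5 : 5 ≤ n) :
    ∀ b (hb : b ≤ n - 2) a (hab : a ≤ b),
    ∃ p : (hattedCycle n).Walk ⟨a, by omega⟩ ⟨b, by omega⟩, p.length = b - a := by
  intro b
  induction b with
  | zero =>
    intro _ a hab
    have : a = 0 := by omega
    subst this
    exact ⟨SimpleGraph.Walk.nil, rfl⟩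
  | succ m ih =>
    intro hb a hab
    by_cases hae : a = m + 1
    · subst hae
      exact ⟨SimpleGraph.Walk.nil, by simp⟩
    · obtain ⟨p, hp⟩ := ih (by omega) a (by omega)
      exact ⟨p.concat (hc_adj_succ h5 (by omega)), by
        rw [SimpleGraph.Walk.length_concat, hp]; omega⟩

lemma hc_dist_fwd (h5 : 5 ≤ n) {a b : ℕ} (hab : a ≤ b) (hb : b ≤ n - 2) :
    (hattedCycle n).dist ⟨a, by omega⟩ ⟨b, by omega⟩ ≤ b - a := by
  obtain ⟨p, hp⟩ := hc_walk_fwd h5 b hb a hab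
  exact hp ▸ SimpleGraph.dist_le p

lemma hc_dist_bwd (h5 : 5 ≤ n) {a b : ℕ} (hab : a ≤ b) (hb : b ≤ n - 2) :
    (hattedCycle n).dist ⟨a, by omega⟩ ⟨b, by omega⟩ ≤ a + 1 + (n - 2 - b) := by
  obtain ⟨p, hp⟩ := hc_walk_fwd h5 a (by omega) 0 (by omega)
  obtain ⟨q, hq⟩ := hc_walk_fwd h5 (n - 2) (by omega) b (by omega)
  refine le_trans (SimpleGraph.dist_le
    (p.reverse.append (SimpleGraph.Walk.cons (hc_adj_wrap h5) q.reverse))) ?_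
  simp only [SimpleGraph.Walk.length_append, SimpleGraph.Walk.length_reverse,
    SimpleGraph.Walk.length_cons, hp, hq]
  omega

lemma hc_dist_hat0 (h5 : 5 ≤ n) {c : ℕ} (hc : c ≤ n - 2) :
    (hattedCycle n).dist ⟨n - 1, by omega⟩ ⟨c, by omega⟩ ≤ 1 + c := by
  obtain ⟨p, hp⟩ := hc_walk_fwd h5 c hc 0 (by omega)
  refine le_trans (SimpleGraph.dist_le (SimpleGraph.Walk.cons (hc_adj_hat0 h5) p)) ?_
  simp only [SimpleGraph.Walk.length_cons, hp]
  omega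

lemma hc_dist_hat2 (h5 : 5 ≤ n) {c : ℕ} (hc : c ≤ n - 2) (hc2 : 2 ≤ c) :
    (hattedCycle n).dist ⟨n - 1, by omega⟩ ⟨c, by omega⟩ ≤ 1 + (c - 2) := by
  obtain ⟨p, hp⟩ := hc_walk_fwd h5 c hc 2 hc2
  refine le_trans (SimpleGraph.dist_le (SimpleGraph.Walk.cons (hc_adj_hat2 h5) p)) ?_
  simp only [SimpleGraph.Walk.length_cons, hp]
  omega

lemma hc_dist_hatb (h5 : 5 ≤ n) {c : ℕ} (hc : c ≤ n - 2) :
    (hattedCycle n).dist ⟨n - 1, by omega⟩ ⟨c, by omega⟩ ≤ 2 + (n - 2 - c) := by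
  obtain ⟨q, hq⟩ := hc_walk_fwd h5 (n - 2) (by omega) c hc
  refine le_trans (SimpleGraph.dist_le (SimpleGraph.Walk.cons (hc_adj_hat0 h5)
      (SimpleGraph.Walk.cons (hc_adj_wrap h5) q.reverse))) ?_
  simp only [SimpleGraph.Walk.length_cons, SimpleGraph.Walk.length_reverse, hq]
  omega

def hatPot (n : ℕ) (i : Fin n) : ℤ :=
  if i.val = n - 1 then 1 else ((min i.val (n - 1 - i.val) : ℕ) : ℤ)

lemma hatPot_adj (h5 : 5 ≤ n) {a b : Fin n} (hab : (hattedCycle n).Adj a b) :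
    |hatPot n a - hatPot n b| ≤ 1 := by
  rw [hattedCycle, SimpleGraph.fromRel_adj] at hab
  obtain ⟨hne, hrel⟩ := hab
  have ha := a.isLt
  have hb := b.isLt
  have hne' : a.val ≠ b.val := fun h => hne (Fin.ext h)
  unfold hatPot
  rw [abs_le]
  rcases hrel with (⟨h1, h2⟩ | ⟨h1, h2⟩ | ⟨h1, h2 | h2⟩) |
    (⟨h1, h2⟩ | ⟨h1, h2⟩ | ⟨h1, h2 | h2⟩) <;> split_ifs <;> push_cast <;> omega

lemma hc_diam_le (h5 : 5 ≤ n) {k : ℕ} (hk : n = 2 * k + 1) (hk2 : 2 ≤ k)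
    (x y : Fin n) : (hattedCycle n).dist x y ≤ k := by
  -- a bound for "both on the cycle, a ≤ b"
  have cyc : ∀ a b : ℕ, ∀ (hab : a ≤ b) (hb : b ≤ n - 2),
      (hattedCycle n).dist ⟨a, by omega⟩ ⟨b, by omega⟩ ≤ k := by
    intro a b hab hb
    have h1 := hc_dist_fwd h5 hab hb
    have h2 := hc_dist_bwd h5 hab hb
    omega
  have hat : ∀ c : ℕ, ∀ (hc : c ≤ n - 2),
      (hattedCycle n).dist ⟨n - 1, by omega⟩ ⟨c, by omega⟩ ≤ k := by
    intro c hc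
    have h1 := hc_dist_hat0 h5 hc
    have h3 := hc_dist_hatb h5 hc
    by_cases h2c : 2 ≤ c
    · have h2 := hc_dist_hat2 h5 hc h2c
      omega
    · omega
  cases x with
  | mk a ha =>
  cases y with
  | mk b hb =>
  by_cases hae : a = n - 1 <;> by_cases hbe : b = n - 1
  · have : (⟨a, ha⟩ : Fin n) = ⟨b, hb⟩ := Fin.ext (by simp [hae, hbe])
    rw [this, SimpleGraph.dist_self]
    omega
  · subst hae
    exact hat b (by omega)
  · subst hbe
    rw [SimpleGraph.dist_comm]
    exact hat a (by omega)
  · by_cases hab : a ≤ b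
    · exact cyc a b hab (by omega)
    · rw [SimpleGraph.dist_comm]
      exact cyc b a (by omega) (by omega)

lemma hc_diam (h5 : 5 ≤ n) (hodd : Odd n) :
    2 * graphDiam (hattedCycle n) = n - 1 := by
  obtain ⟨k, hk⟩ := hodd
  have hk' : n = 2 * k + 1 := by omega
  have hk2 : 2 ≤ k := by omega
  have hle : graphDiam (hattedCycle n) ≤ k := by
    unfold graphDiam
    apply Finset.sup_le
    intro x _
    apply Finset.sup_le
    intro y _
    exact hc_diam_le h5 hk' hk2 x y
  have hge : k ≤ graphDiam (hattedCycle n) := by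
    have hreach : (hattedCycle n).Reachable ⟨0, by omega⟩ ⟨k, by omega⟩ := by
      obtain ⟨p, _⟩ := hc_walk_fwd h5 k (by omega) 0 (by omega)
      exact ⟨p⟩
    have hpot := abs_sub_le_dist (hatPot n) (fun a b h => hatPot_adj h5 h) hreach
    have h0 : hatPot n (⟨0, by omega⟩ : Fin n) = 0 := by
      unfold hatPot
      rw [if_neg (by simp; omega)]
      simp
    have hkk : hatPot n (⟨k, by omega⟩ : Fin n) = k := by
      unfold hatPot
      rw [if_neg (by simp; omega)]
      simp only
      have : min k (n - 1 - k) = k := by omega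
      rw [this]
    rw [h0, hkk] at hpot
    simp only [zero_sub, abs_neg, Int.abs_natCast] at hpot
    have := dist_le_diam (G := hattedCycle n) ⟨0, by omega⟩ ⟨k, by omega⟩
    omega
  omega

end Hatted

theorem sti_diam_bounds [Fintype V] (G : SimpleGraph V)
    (hSTI : IsSTI G) (hn : 5 ≤ Fintype.card V) :
    (2 ≤ graphDiam G ∧ 2 * graphDiam G ≤ Fintype.card V - 1) ∧
    (graphDiam G = 2 ↔ Nonempty (G ≃g completeBipartiteGraph (Fin ((Fintype.card V - 1) / 2)) (Fin ((Fintype.card V + 1) / 2)))) ∧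
    2 * graphDiam (hattedCycle (Fintype.card V)) = Fintype.card V - 1 := by

  have hodd := odd_card hSTI (by omega)
  refine ⟨⟨two_le_diam hSTI hn, diam_upper hSTI hn⟩, ⟨?_, ?_⟩, hc_diam hn hodd⟩
  · exact diam_two_iso hSTI hn
  · rintro ⟨e⟩
    have hNE : Nonempty V := Fintype.card_pos_iff.mp (by omega)
    rw [iso_diam_eq e]
    apply cbg_diam (by omega) (by omega)
end

section
/- If G is a stepwise transmission irregular (STI) graph of order n ≥ 5, then W(G) ≥ (3n² − 4n + 1)/4, with equality if and only if G is isomorphic to K_{(n−1)/2,(n+1)/2}. -/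
open Finset

variable {V : Type*}

/-- The Wiener index: the sum of distances over all unordered pairs of vertices. -/
noncomputable def wiener [Fintype V] [DecidableEq V] (G : SimpleGraph V) : ℕ :=
  ∑ e : Sym2 V, Sym2.lift ⟨fun u v => G.dist u v, fun _ _ => SimpleGraph.dist_comm⟩ e

set_option linter.unusedSectionVars false

section Aux

variable [Fintype V] [DecidableEq V]

lemma sum_sym2_aux (f : V → V → ℕ) (hf : ∀ a b, f a b = f b a) (hd : ∀ a, f a a = 0) :
    ∑ p : V × V, f p.1 p.2 = 2 * ∑ e : Sym2 V, Sym2.lift ⟨f, hf⟩ e := by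
  rw [Finset.mul_sum, ← Finset.sum_fiberwise_of_maps_to
    (g := fun p : V × V => Sym2.mk p.1 p.2) (fun p _ => Finset.mem_univ (Sym2.mk p.1 p.2))
    (fun p => f p.1 p.2)]
  refine Finset.sum_congr rfl fun e _ => ?_
  induction e using Sym2.ind with
  | _ a b =>
    rw [Sym2.lift_mk]
    change _ = 2 * f a b
    by_cases hab : a = b
    · subst hab
      rw [hd a, mul_zero]
      refine Finset.sum_eq_zero fun p hp => ?_
      obtain ⟨x, y⟩ := p
      simp only [Finset.mem_filter, Sym2.eq_iff] at hp
      obtain ⟨-, (⟨h1, h2⟩ | ⟨h1, h2⟩)⟩ := hp <;> (subst h1; subst h2; exact hd _)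
    · have hset : Finset.univ.filter (fun p : V × V => Sym2.mk p.1 p.2 = s(a, b)) =
          {(a, b), (b, a)} := by
        ext ⟨x, y⟩
        simp only [Finset.mem_filter, Finset.mem_univ, true_and, Finset.mem_insert,
          Finset.mem_singleton, Prod.mk.injEq, Sym2.eq_iff]
      rw [hset, Finset.sum_pair (by simp [hab, Ne, Prod.ext_iff])]
      rw [hf b a, two_mul]

lemma two_mul_wiener (G : SimpleGraph V) :
    2 * wiener G = ∑ v, transmission G v := by
  rw [wiener, ← sum_sym2_aux (fun u v => G.dist u v) (fun _ _ => SimpleGraph.dist_comm)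
    (fun _ => SimpleGraph.dist_self)]
  rw [Fintype.sum_prod_type]
  rfl

lemma two_le_dist {G : SimpleGraph V} (hc : G.Connected) {u v : V} (h1 : u ≠ v)
    (h2 : ¬ G.Adj v u) : 2 ≤ G.dist v u := by
  have h0 : G.dist v u ≠ 0 := fun h => h1 ((hc.dist_eq_zero_iff).mp h).symm
  have h1' : G.dist v u ≠ 1 := fun h => h2 (SimpleGraph.dist_eq_one_iff_adj.mp h)
  omega

lemma dist_ge_gZ {G : SimpleGraph V} (hc : G.Connected) [DecidableRel G.Adj] (v u : V) :
    (if u = v then (0:ℤ) else if G.Adj v u then 1 else 2) ≤ (G.dist v u : ℤ) := by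
  by_cases h1 : u = v
  · simp [h1]
  · by_cases h2 : G.Adj v u
    · simp only [h1, h2, if_false, if_true]
      have := hc.pos_dist_of_ne (fun h => h1 h.symm)
      exact_mod_cast this
    · simp only [h1, h2, if_false]
      exact_mod_cast two_le_dist hc h1 h2

lemma sum_gZ (G : SimpleGraph V) [DecidableRel G.Adj] (v : V) :
    ∑ u : V, (if u = v then (0:ℤ) else if G.Adj v u then 1 else 2)
      = 2 * (Fintype.card V : ℤ) - 2 - ((Finset.univ.filter (G.Adj v ·)).card : ℤ) := by
  have hpt : ∀ u : V, (if u = v then (0:ℤ) else if G.Adj v u then 1 else 2)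
      = 2 - (if u = v then (2:ℤ) else 0) - (if G.Adj v u then (1:ℤ) else 0) := by
    intro u
    by_cases h1 : u = v
    · subst h1
      simp [G.irrefl]
    · by_cases h2 : G.Adj v u <;> simp [h1, h2]
  rw [Finset.sum_congr rfl fun u _ => hpt u]
  rw [Finset.sum_sub_distrib, Finset.sum_sub_distrib, Finset.sum_const,
    Finset.sum_ite_eq' Finset.univ v (fun _ => (2:ℤ))]
  rw [Finset.sum_boole]
  simp [Finset.card_univ]
  ring

lemma transmission_cast (G : SimpleGraph V) (v : V) :
    (transmission G v : ℤ) = ∑ u : V, (G.dist v u : ℤ) := by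
  rw [transmission]; push_cast; rfl

lemma transmission_lower (G : SimpleGraph V) (hc : G.Connected) [DecidableRel G.Adj] (v : V) :
    2 * (Fintype.card V : ℤ) - 2 - ((Finset.univ.filter (G.Adj v ·)).card : ℤ)
      ≤ (transmission G v : ℤ) := by
  rw [transmission_cast, ← sum_gZ G v]
  exact Finset.sum_le_sum fun u _ => dist_ge_gZ hc v u

lemma sum_eq_of_le {ι : Type*} {s : Finset ι} {f g : ι → ℤ}
    (h : ∀ i ∈ s, f i ≤ g i) (h' : ∑ i ∈ s, g i ≤ ∑ i ∈ s, f i) :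
    ∀ i ∈ s, f i = g i := by
  intro i hi
  by_contra hne
  exact absurd (Finset.sum_lt_sum h ⟨i, hi, lt_of_le_of_ne (h i hi) hne⟩) (not_lt.mpr h')

lemma exists_edge {G : SimpleGraph V} (hc : G.Connected) (h2 : 1 < Fintype.card V) :
    ∃ u v, G.Adj u v := by
  obtain ⟨u, v, huv⟩ := Fintype.exists_pair_of_one_lt_card h2
  obtain ⟨p⟩ := hc u v
  exact ⟨u, p.getVert 1, SimpleGraph.Walk.adj_snd (SimpleGraph.Walk.not_nil_of_ne huv)⟩

lemma dist_eq_two_of_char {G : SimpleGraph V} (hc : G.Connected) {P : V → Prop}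
    (hchar : ∀ u v, G.Adj u v ↔ ¬ (P u ↔ P v)) (hA : ∃ w, P w) (hB : ∃ w, ¬ P w)
    {u v : V} (h1 : u ≠ v) (h2 : ¬ G.Adj v u) : G.dist v u = 2 := by
  have hPuv : P v ↔ P u := not_not.mp (fun hcon => h2 ((hchar v u).mpr hcon))
  have hw : ∃ w, (P w ↔ ¬ P v) := by
    by_cases hv : P v
    · obtain ⟨w, hw⟩ := hB; exact ⟨w, by tauto⟩
    · obtain ⟨w, hw⟩ := hA; exact ⟨w, by tauto⟩
  obtain ⟨w, hw⟩ := hw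
  have hvw : G.Adj v w := (hchar v w).mpr (by tauto)
  have hwu : G.Adj w u := (hchar w u).mpr (by tauto)
  have hle : G.dist v u ≤ 2 := by
    have := SimpleGraph.dist_le (SimpleGraph.Walk.cons hvw
      (SimpleGraph.Walk.cons hwu SimpleGraph.Walk.nil))
    simpa using this
  exact le_antisymm hle (two_le_dist hc h1 h2)

lemma transmission_of_char {G : SimpleGraph V} (hc : G.Connected) [DecidableRel G.Adj]
    {P : V → Prop} (hchar : ∀ u v, G.Adj u v ↔ ¬ (P u ↔ P v))
    (hA : ∃ w, P w) (hB : ∃ w, ¬ P w) (v : V) :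
    (transmission G v : ℤ)
      = 2 * (Fintype.card V : ℤ) - 2 - ((Finset.univ.filter (G.Adj v ·)).card : ℤ) := by
  rw [transmission_cast, ← sum_gZ G v]
  refine Finset.sum_congr rfl fun u _ => ?_
  by_cases h1 : u = v
  · simp [h1]
  · by_cases h2 : G.Adj v u
    · simp [h1, h2, SimpleGraph.dist_eq_one_iff_adj.mpr h2]
    · simp [h1, h2, dist_eq_two_of_char hc hchar hA hB h1 h2]

lemma wiener_of_char {G : SimpleGraph V} (hc : G.Connected) [DecidableRel G.Adj]
    {P : V → Prop} [DecidablePred P] (hchar : ∀ u v, G.Adj u v ↔ ¬ (P u ↔ P v))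
    (hA : ∃ w, P w) (hB : ∃ w, ¬ P w) :
    4 * (wiener G : ℤ) = 4 * (Fintype.card V : ℤ) ^ 2 - 4 * (Fintype.card V : ℤ)
      - 4 * ((Finset.univ.filter P).card : ℤ) * ((Finset.univ.filter (fun v => ¬ P v)).card : ℤ) := by
  set n : ℤ := (Fintype.card V : ℤ) with hn
  set a : ℤ := ((Finset.univ.filter P).card : ℤ) with ha
  set b : ℤ := ((Finset.univ.filter (fun v => ¬ P v)).card : ℤ) with hb
  have hdeg : ∀ v : V, ((Finset.univ.filter (G.Adj v ·)).card : ℤ) = if P v then b else a := by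
    intro v
    by_cases hv : P v
    · rw [if_pos hv]
      congr 2
      ext u
      simp only [Finset.mem_filter, Finset.mem_univ, true_and]
      rw [hchar]
      tauto
    · rw [if_neg hv]
      congr 2
      ext u
      simp only [Finset.mem_filter, Finset.mem_univ, true_and]
      rw [hchar]
      tauto
  have h2w : 2 * (wiener G : ℤ) = ∑ v : V, (transmission G v : ℤ) := by
    have := two_mul_wiener G
    exact_mod_cast congrArg (fun k : ℕ => (k : ℤ)) this
  have hsum : ∑ v : V, (transmission G v : ℤ)
      = ∑ v : V, (2 * n - 2 - (if P v then b else a)) := by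
    refine Finset.sum_congr rfl fun v _ => ?_
    rw [transmission_of_char hc hchar hA hB v, hdeg v]
  have hsplit : ∑ v : V, (2 * n - 2 - (if P v then b else a))
      = (Fintype.card V : ℤ) * (2 * n - 2) - (a * b + b * a) := by
    rw [Finset.sum_sub_distrib, Finset.sum_const, Finset.sum_ite, Finset.sum_const,
      Finset.sum_const]
    simp only [Finset.card_univ, nsmul_eq_mul, ← ha, ← hb]
  have : 2 * (wiener G : ℤ) = n * (2 * n - 2) - 2 * (a * b) := by
    rw [h2w, hsum, hsplit, hn]; ring
  linarith

def sumLeftEquiv (α β : Type*) : {x : α ⊕ β // x.isLeft = true} ≃ α where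
  toFun x := Sum.getLeft x.1 x.2
  invFun a := ⟨Sum.inl a, rfl⟩
  left_inv := by
    rintro ⟨(a | b), h⟩
    · rfl
    · simp at h
  right_inv a := rfl

def sumNotLeftEquiv (α β : Type*) : {x : α ⊕ β // ¬ x.isLeft = true} ≃ β where
  toFun x := Sum.getRight x.1 (by
    rcases x with ⟨(a | b), h⟩
    · simp at h
    · rfl)
  invFun b := ⟨Sum.inr b, by simp⟩
  left_inv := by
    rintro ⟨(a | b), h⟩
    · simp at h
    · rfl
  right_inv b := rfl

lemma iso_of_char {G : SimpleGraph V} {P : V → Prop} [DecidablePred P]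
    (hchar : ∀ u v, G.Adj u v ↔ ¬ (P u ↔ P v)) {p q : ℕ}
    (hp : (Finset.univ.filter P).card = p)
    (hq : (Finset.univ.filter (fun v => ¬ P v)).card = q) :
    Nonempty (G ≃g completeBipartiteGraph (Fin p) (Fin q)) := by
  have e1 : {v // P v} ≃ Fin p :=
    Fintype.equivFinOfCardEq (by rw [Fintype.card_subtype]; exact hp)
  have e2 : {v // ¬ P v} ≃ Fin q :=
    Fintype.equivFinOfCardEq (by rw [Fintype.card_subtype]; exact hq)
  refine ⟨⟨(Equiv.sumCompl P).symm.trans (Equiv.sumCongr e1 e2), ?_⟩⟩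
  intro u v
  by_cases hu : P u <;> by_cases hv : P v <;>
    simp [Equiv.sumCompl_symm_apply_of_pos, Equiv.sumCompl_symm_apply_of_neg,
      hu, hv, hchar u v] <;> tauto

end Aux

theorem sti_wiener_lower_bound [Fintype V] [DecidableEq V] (G : SimpleGraph V)
    (hSTI : IsSTI G) (hn : 5 ≤ Fintype.card V) :
    3 * (Fintype.card V : ℤ) ^ 2 - 4 * (Fintype.card V : ℤ) + 1 ≤ 4 * (wiener G : ℤ) ∧
    (4 * (wiener G : ℤ) = 3 * (Fintype.card V : ℤ) ^ 2 - 4 * (Fintype.card V : ℤ) + 1 ↔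
      Nonempty (G ≃g completeBipartiteGraph (Fin ((Fintype.card V - 1) / 2)) (Fin ((Fintype.card V + 1) / 2)))) := by
  classical
  obtain ⟨hc, hsti⟩ := hSTI
  set n : ℕ := Fintype.card V with hn'
  -- adjacency flips parity of transmission
  have hbip : ∀ u v, G.Adj u v → ¬ (Even (transmission G u) ↔ Even (transmission G v)) := by
    intro u v huv
    have h1 := hsti u v huv
    rw [Nat.even_iff, Nat.even_iff]
    omega
  set P : V → Prop := fun v => Even (transmission G v) with hP
  set A := Finset.univ.filter P with hA
  set B := Finset.univ.filter (fun v => ¬ P v) with hB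
  have habn : A.card + B.card = n := Finset.card_filter_add_card_filter_not _
  set a : ℕ := A.card with ha'
  set b : ℕ := B.card with hb'
  have hnbA : ∀ v, P v → Finset.univ.filter (G.Adj v ·) ⊆ B := by
    intro v hv u hu
    rw [Finset.mem_filter] at hu
    rw [hB, Finset.mem_filter]
    exact ⟨Finset.mem_univ u, fun hPu => (hbip v u hu.2) ⟨fun _ => hPu, fun _ => hv⟩⟩
  have hnbB : ∀ v, ¬ P v → Finset.univ.filter (G.Adj v ·) ⊆ A := by
    intro v hv u hu
    rw [Finset.mem_filter] at hu
    rw [hA, Finset.mem_filter]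
    refine ⟨Finset.mem_univ u, ?_⟩
    by_contra hPu
    exact (hbip v u hu.2) ⟨fun h => absurd h hv, fun h => absurd h hPu⟩
  set c : V → ℤ := fun v => if P v then 2 * (n:ℤ) - 2 - b else 2 * (n:ℤ) - 2 - a with hcdef
  have hTlow : ∀ v ∈ Finset.univ, c v ≤ (transmission G v : ℤ) := by
    intro v _
    have h1 := transmission_lower G hc v
    by_cases hv : P v
    · have h2 : ((Finset.univ.filter (G.Adj v ·)).card : ℤ) ≤ (b:ℤ) := by
        exact_mod_cast Finset.card_le_card (hnbA v hv)
      simp only [hcdef, if_pos hv]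
      linarith
    · have h2 : ((Finset.univ.filter (G.Adj v ·)).card : ℤ) ≤ (a:ℤ) := by
        exact_mod_cast Finset.card_le_card (hnbB v hv)
      simp only [hcdef, if_neg hv]
      linarith
  have habnZ : (a : ℤ) + (b : ℤ) = (n : ℤ) := by exact_mod_cast habn
  have hcsum : ∑ v : V, c v = (n:ℤ) * (2 * (n:ℤ) - 2) - ((a:ℤ) * b + (b:ℤ) * a) := by
    simp only [hcdef]
    rw [Finset.sum_ite, Finset.sum_const, Finset.sum_const]
    simp only [← hA, ← hB, ← ha', ← hb', nsmul_eq_mul]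
    linear_combination (2*(n:ℤ) - 2) * habnZ
  have h2w : 2 * (wiener G : ℤ) = ∑ v : V, (transmission G v : ℤ) := by
    have := two_mul_wiener G
    exact_mod_cast congrArg (fun k : ℕ => (k : ℤ)) this
  have hWlow : (n:ℤ) * (2 * (n:ℤ) - 2) - ((a:ℤ) * b + (b:ℤ) * a) ≤ 2 * (wiener G : ℤ) := by
    rw [h2w, ← hcsum]
    exact Finset.sum_le_sum hTlow
  -- main inequality
  have hmain : 3 * (n : ℤ) ^ 2 - 4 * (n:ℤ) + 1 ≤ 4 * (wiener G : ℤ) := by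
    by_cases hane : a = b
    · by_contra hcon
      push_neg at hcon
      have h4 : 4 * ((a:ℤ) * b) = (n:ℤ)^2 := by
        rw [← habnZ, hane]; ring
      have heq4 : 2 * (wiener G : ℤ) = ∑ v : V, c v := by
        rw [hcsum]; linarith
      have heqv := sum_eq_of_le hTlow (by rw [← h2w, heq4])
      obtain ⟨u, v, huv⟩ := exists_edge hc (by omega)
      have h1 := hsti u v huv
      have hcc : c u = c v := by
        simp only [hcdef, hane]
        split_ifs <;> rfl
      have h2 : (transmission G u : ℤ) = (transmission G v : ℤ) := by
        rw [← heqv u (Finset.mem_univ u), ← heqv v (Finset.mem_univ v), hcc]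
      omega
    · have hne : ((a:ℤ) - b) ≠ 0 := by
        intro h
        exact hane (by exact_mod_cast sub_eq_zero.mp h)
      have hsq : 1 ≤ ((a:ℤ) - b)^2 := by
        rcases lt_or_gt_of_ne hne with h | h <;> nlinarith
      nlinarith
  refine ⟨hmain, ?_, ?_⟩
  · -- equality implies iso
    intro heq
    have hodd : Odd (n:ℤ) := by
      by_contra h
      rw [Int.not_odd_iff_even] at h
      obtain ⟨k, hk⟩ := h
      have h1 : Odd (4 * (wiener G:ℤ)) := by
        rw [heq]; exact ⟨6*k^2 - 4*k, by rw [hk]; ring⟩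
      have h2 : Even (4 * (wiener G:ℤ)) := ⟨2 * wiener G, by ring⟩
      exact ((Int.not_odd_iff_even.mpr h2)) h1
    obtain ⟨t, ht⟩ := hodd
    have habge : (n:ℤ)^2 - 1 ≤ 4*((a:ℤ)*b) := by linarith
    have hid : 4*((a:ℤ)*b) = (n:ℤ)^2 - ((a:ℤ)-b)^2 := by rw [← habnZ]; ring
    have hd1 : -1 ≤ (a:ℤ) - b := by nlinarith
    have hd2 : (a:ℤ) - b ≤ 1 := by nlinarith
    have hcases : (a = (n-1)/2 ∧ b = (n+1)/2) ∨ (b = (n-1)/2 ∧ a = (n+1)/2) := by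
      omega
    have hd : (a:ℤ) - b = 1 ∨ (a:ℤ) - b = -1 := by omega
    have hab4 : 4*((a:ℤ)*b) = (n:ℤ)^2 - 1 := by
      rcases hd with h | h <;> rw [hid, h] <;> ring
    have heq4 : 2 * (wiener G : ℤ) = ∑ v : V, c v := by
      rw [hcsum]; linarith
    have heqv := sum_eq_of_le hTlow (by rw [← h2w, heq4])
    have hfA : ∀ v, P v → Finset.univ.filter (G.Adj v ·) = B := by
      intro v hv
      refine Finset.eq_of_subset_of_card_le (hnbA v hv) ?_
      have h1 := transmission_lower G hc v
      have h2 := heqv v (Finset.mem_univ v)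
      simp only [hcdef, if_pos hv] at h2
      have : (b:ℤ) ≤ ((Finset.univ.filter (G.Adj v ·)).card : ℤ) := by linarith
      exact_mod_cast this
    have hfB : ∀ v, ¬ P v → Finset.univ.filter (G.Adj v ·) = A := by
      intro v hv
      refine Finset.eq_of_subset_of_card_le (hnbB v hv) ?_
      have h1 := transmission_lower G hc v
      have h2 := heqv v (Finset.mem_univ v)
      simp only [hcdef, if_neg hv] at h2
      have : (a:ℤ) ≤ ((Finset.univ.filter (G.Adj v ·)).card : ℤ) := by linarith
      exact_mod_cast this
    have hchar : ∀ u v, G.Adj u v ↔ ¬ (P u ↔ P v) := by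
      intro u v
      constructor
      · exact hbip u v
      · intro h
        by_cases hu : P u
        · have hv : ¬ P v := fun hv => h ⟨fun _ => hv, fun _ => hu⟩
          have hvB : v ∈ B := by rw [hB, Finset.mem_filter]; exact ⟨Finset.mem_univ v, hv⟩
          rw [← hfA u hu, Finset.mem_filter] at hvB
          exact hvB.2
        · have hv : P v := by tauto
          have hvA : v ∈ A := by rw [hA, Finset.mem_filter]; exact ⟨Finset.mem_univ v, hv⟩
          rw [← hfB u hu, Finset.mem_filter] at hvA
          exact hvA.2
    rcases hcases with ⟨h1, h2⟩ | ⟨h1, h2⟩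
    · exact iso_of_char hchar (by rw [← hA, ← ha', h1]) (by rw [← hB, ← hb', h2])
    · have hchar' : ∀ u v, G.Adj u v ↔ ¬ ((¬ P u) ↔ (¬ P v)) := by
        intro u v
        rw [hchar u v]
        tauto
      have hfilt : (Finset.univ.filter (fun v => ¬ ¬ P v)) = A := by
        rw [hA]; ext x; simp [not_not]
      exact iso_of_char hchar' (by rw [← hB, ← hb', h1]) (by rw [hfilt, ← ha', h2])
  · -- iso implies equality
    rintro ⟨φ⟩
    set p := (n-1)/2 with hpdef
    set q := (n+1)/2 with hqdef
    have hcard : n = p + q := by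
      have h1 : Fintype.card V = Fintype.card (Fin p ⊕ Fin q) :=
        Fintype.card_congr φ.toEquiv
      rw [Fintype.card_sum, Fintype.card_fin, Fintype.card_fin] at h1
      exact h1
    set Pl : V → Prop := fun v => (φ v).isLeft = true with hPl
    have hK : ∀ x y : Fin p ⊕ Fin q, (completeBipartiteGraph (Fin p) (Fin q)).Adj x y ↔
        ¬ ((x.isLeft = true) ↔ (y.isLeft = true)) := by
      rintro (x | x) (y | y) <;> simp
    have hchar : ∀ u v, G.Adj u v ↔ ¬ (Pl u ↔ Pl v) := by
      intro u v
      rw [← φ.map_rel_iff]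
      exact hK (φ u) (φ v)
    have hcp : (Finset.univ.filter Pl).card = p := by
      rw [← Fintype.card_subtype]
      exact (Fintype.card_congr ((φ.toEquiv.subtypeEquiv (fun v => Iff.rfl)).trans
        (sumLeftEquiv (Fin p) (Fin q)))).trans (Fintype.card_fin p)
    have hcq : (Finset.univ.filter (fun v => ¬ Pl v)).card = q := by
      rw [← Fintype.card_subtype]
      exact (Fintype.card_congr ((φ.toEquiv.subtypeEquiv (fun v => Iff.rfl)).trans
        (sumNotLeftEquiv (Fin p) (Fin q)))).trans (Fintype.card_fin q)
    have hAne : ∃ w, Pl w := by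
      have : 0 < (Finset.univ.filter Pl).card := by omega
      obtain ⟨w, hw⟩ := Finset.card_pos.mp this
      exact ⟨w, (Finset.mem_filter.mp hw).2⟩
    have hBne : ∃ w, ¬ Pl w := by
      have : 0 < (Finset.univ.filter (fun v => ¬ Pl v)).card := by omega
      obtain ⟨w, hw⟩ := Finset.card_pos.mp this
      exact ⟨w, (Finset.mem_filter.mp hw).2⟩
    have hW := wiener_of_char hc hchar hAne hBne
    rw [hcp, hcq] at hW
    have hz1 : (n:ℤ) = 2*(p:ℤ)+1 := by omega
    have hz2 : (q:ℤ) = (p:ℤ)+1 := by omega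
    rw [hW, hz1, hz2]
    ring
end

section
/- If G is a stepwise transmission irregular (STI) graph of order n ≥ 5, then min{Tr_G(v) : v ∈ V(G)} ≥ (3n − 5)/2, with equality if and only if G is isomorphic to K_{(n−1)/2,(n+1)/2}. -/
open Finset

variable {V : Type*}

section Aux

variable {G : SimpleGraph V}

lemma dist_le_iso {W : Type*} {G' : SimpleGraph W} (e : G ≃g G') (u v : V) :
    G'.dist (e u) (e v) ≤ G.dist u v := by
  by_cases hr : G.Reachable u v
  · obtain ⟨p, hp⟩ := hr.exists_walk_length_eq_dist
    calc G'.dist (e u) (e v) ≤ (p.map e.toHom).length := SimpleGraph.dist_le _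
      _ = G.dist u v := by rw [SimpleGraph.Walk.length_map, hp]
  · have h2 : ¬ G'.Reachable (e u) (e v) := fun h => hr (by simpa using h.map e.symm.toHom)
    simp [SimpleGraph.dist_eq_zero_iff_eq_or_not_reachable.mpr (Or.inr h2)]

lemma dist_iso {W : Type*} {G' : SimpleGraph W} (e : G ≃g G') (u v : V) :
    G'.dist (e u) (e v) = G.dist u v :=
  le_antisymm (dist_le_iso e u v) (by simpa using dist_le_iso e.symm (e u) (e v))

lemma transmission_iso [Fintype V] {W : Type*} [Fintype W] {G' : SimpleGraph W} (e : G ≃g G') (v : V) :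
    transmission G' (e v) = transmission G v := by
  unfold transmission
  exact (Fintype.sum_equiv e.toEquiv (fun u => G.dist v u)
    (fun w => G'.dist (e v) w) (fun u => (dist_iso e v u).symm)).symm

variable [Fintype V]

lemma parity_ne_of_adj (hSTI : IsSTI G) {u v : V} (h : G.Adj u v) :
    transmission G u % 2 ≠ transmission G v % 2 := by
  have h1 := hSTI.2 u v h
  rcases Int.natAbs_eq_iff.mp h1 with h2 | h2 <;> omega

lemma two_le_dist_s14 (hSTI : IsSTI G) {u v : V} (hne : u ≠ v)
    (hp : transmission G u % 2 = transmission G v % 2) : 2 ≤ G.dist u v := by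
  have h0 : 0 < G.dist u v := hSTI.1.pos_dist_of_ne hne
  by_contra h
  have h1 : G.dist u v = 1 := by omega
  exact parity_ne_of_adj hSTI (SimpleGraph.dist_eq_one_iff_adj.mp h1) hp

lemma card_le_sum_dist (hc : G.Connected) (v : V) (s : Finset V) (hs : v ∉ s) :
    s.card ≤ ∑ u ∈ s, G.dist v u := by
  calc s.card = s.card • 1 := by simp
    _ ≤ _ := Finset.card_nsmul_le_sum s _ _
        (fun u hu => hc.pos_dist_of_ne (by rintro rfl; exact hs hu))

lemma sum_split (hSTI : IsSTI G) [DecidableEq V] (v : V) (P : Finset V)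
    (hP : ∀ u, u ∈ P ↔ transmission G u % 2 = transmission G v % 2) :
    transmission G v = ∑ u ∈ P, G.dist v u + ∑ u ∈ Pᶜ, G.dist v u ∧
    2 * (P.card - 1) ≤ ∑ u ∈ P, G.dist v u ∧
    Pᶜ.card ≤ ∑ u ∈ Pᶜ, G.dist v u := by
  have hv : v ∈ P := (hP v).mpr rfl
  refine ⟨(Finset.sum_add_sum_compl P _).symm, ?_, ?_⟩
  · have h1 : ∑ u ∈ P, G.dist v u = ∑ u ∈ P.erase v, G.dist v u := by
      rw [← Finset.sum_erase_add P _ hv, SimpleGraph.dist_self, add_zero]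
    rw [h1, ← Finset.card_erase_of_mem hv]
    calc 2 * (P.erase v).card = (P.erase v).card • 2 := by rw [smul_eq_mul, mul_comm]
      _ ≤ _ := Finset.card_nsmul_le_sum _ _ _ (fun u hu =>
          two_le_dist_s14 hSTI (fun h => (Finset.mem_erase.mp hu).1 h.symm)
            (((hP u).mp (Finset.mem_of_mem_erase hu)).symm))
  · exact card_le_sum_dist hSTI.1 v Pᶜ (by simp [hv])

lemma part_bound (hSTI : IsSTI G) [DecidableEq V] (v : V) (P : Finset V)
    (hP : ∀ u, u ∈ P ↔ transmission G u % 2 = transmission G v % 2) :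
    2 * (P.card - 1) + Pᶜ.card ≤ transmission G v := by
  obtain ⟨h1, h2, h3⟩ := sum_split hSTI v P hP
  omega

lemma part_adj (hSTI : IsSTI G) [DecidableEq V] (v : V) (P : Finset V)
    (hP : ∀ u, u ∈ P ↔ transmission G u % 2 = transmission G v % 2)
    (heq : transmission G v = 2 * (P.card - 1) + Pᶜ.card) :
    ∀ u₀ ∈ Pᶜ, G.Adj v u₀ := by
  obtain ⟨h1, h2, h3⟩ := sum_split hSTI v P hP
  have hsum : ∑ u ∈ Pᶜ, G.dist v u = Pᶜ.card := by omega
  intro u₀ hu₀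
  have hne : v ≠ u₀ := by
    rintro rfl
    exact (Finset.mem_compl.mp hu₀) ((hP v).mpr rfl)
  have hpos : 0 < G.dist v u₀ := hSTI.1.pos_dist_of_ne hne
  have hle : G.dist v u₀ ≤ 1 := by
    by_contra h
    have hrest : (Pᶜ.erase u₀).card ≤ ∑ u ∈ Pᶜ.erase u₀, G.dist v u :=
      card_le_sum_dist hSTI.1 v _ (fun hmem =>
        (Finset.mem_compl.mp (Finset.mem_of_mem_erase hmem)) ((hP v).mpr rfl))
    have hsplit := Finset.sum_erase_add Pᶜ (G.dist v) hu₀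
    have hc1 := Finset.card_erase_of_mem hu₀
    have hc2 : 1 ≤ Pᶜ.card := Finset.card_pos.mpr ⟨u₀, hu₀⟩
    omega
  exact SimpleGraph.dist_eq_one_iff_adj.mp (by omega)

end Aux

theorem sti_min_transmission [Fintype V] (G : SimpleGraph V)
    (hSTI : IsSTI G) (hn : 5 ≤ Fintype.card V) :
    (∀ v : V, 3 * Fintype.card V - 5 ≤ 2 * transmission G v) ∧
    ((∃ v : V, 2 * transmission G v = 3 * Fintype.card V - 5) ↔
      Nonempty (G ≃g completeBipartiteGraph (Fin ((Fintype.card V - 1) / 2)) (Fin ((Fintype.card V + 1) / 2)))) := by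
  classical
  set n := Fintype.card V with hn'
  have hc := hSTI.1
  obtain ⟨P, hP⟩ : ∃ P : V → Finset V,
      ∀ v u, u ∈ P v ↔ transmission G u % 2 = transmission G v % 2 :=
    ⟨fun v => univ.filter (fun u => transmission G u % 2 = transmission G v % 2), by simp⟩
  have hPcompl : ∀ v : V, (P v)ᶜ.card = n - (P v).card := fun v => by
    rw [Finset.card_compl]
  have hPpos : ∀ v : V, 1 ≤ (P v).card := fun v =>
    Finset.card_pos.mpr ⟨v, (hP v v).mpr rfl⟩
  have hPle : ∀ v : V, (P v).card ≤ n := fun v => by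
    simpa using Finset.card_le_univ (P v)
  have hneigh : ∀ v : V, ∃ u, G.Adj v u := by
    intro v
    have hnt : Nontrivial V := Fintype.one_lt_card_iff_nontrivial.mp (by omega)
    obtain ⟨w, hw⟩ := exists_ne v
    obtain ⟨p⟩ := hc v w
    cases p with
    | nil => exact absurd rfl hw
    | cons h q => exact ⟨_, h⟩
  have hPadj : ∀ {v u : V}, G.Adj v u → P u = (P v)ᶜ := by
    intro v u h
    have h1 := parity_ne_of_adj hSTI h
    ext x
    rw [hP, Finset.mem_compl, hP]
    omega
  have main : ∀ v : V, 3 * n - 5 ≤ 2 * transmission G v ∧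
      (2 * transmission G v = 3 * n - 5 →
        2 * (P v).card = n - 1 ∧
        transmission G v = 2 * ((P v).card - 1) + (P v)ᶜ.card) := by
    intro v
    have b1 := part_bound hSTI v (P v) (hP v)
    have hc1 := hPcompl v
    have hc2 := hPpos v
    have hc3 := hPle v
    by_cases hcase : n - 1 ≤ 2 * (P v).card
    · exact ⟨by omega, fun he => ⟨by omega, by omega⟩⟩
    · obtain ⟨u, hu⟩ := hneigh v
      have b2 := part_bound hSTI u (P u) (hP u)
      have hcu : (P u).card = n - (P v).card := by rw [hPadj hu]; exact hc1
      have hcu' := hPcompl u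
      have hd := hSTI.2 v u hu
      rcases Int.natAbs_eq_iff.mp hd with h1 | h1 <;>
        exact ⟨by omega, fun he => absurd he (by omega)⟩
  refine ⟨fun v => (main v).1, ?_, ?_⟩
  · -- forward direction
    rintro ⟨v, hv⟩
    obtain ⟨hcard, hEq⟩ := (main v).2 hv
    have hc1 := hPcompl v
    have hc2 := hPpos v
    have hc3 := hPle v
    have hadjB : ∀ u ∈ (P v)ᶜ, G.Adj v u := part_adj hSTI v (P v) (hP v) hEq
    have hadjA : ∀ u ∈ (P v)ᶜ, ∀ w ∈ P v, G.Adj u w := by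
      intro u hu w hw
      have hvu : G.Adj v u := hadjB u hu
      have hPu : P u = (P v)ᶜ := hPadj hvu
      have hcu : (P u).card = n - (P v).card := by rw [hPu]; exact hc1
      have hcu' := hPcompl u
      have b2 := part_bound hSTI u (P u) (hP u)
      have hd := hSTI.2 v u hvu
      have heqU : transmission G u = 2 * ((P u).card - 1) + (P u)ᶜ.card := by
        rcases Int.natAbs_eq_iff.mp hd with h1 | h1 <;> omega
      have := part_adj hSTI u (P u) (hP u) heqU
      apply this
      rw [hPu, compl_compl]
      exact hw
    have hchar : ∀ x y : V, G.Adj x y ↔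
        ((x ∈ P v ∧ y ∉ P v) ∨ (x ∉ P v ∧ y ∈ P v)) := by
      intro x y
      constructor
      · intro h
        have h1 := parity_ne_of_adj hSTI h
        rw [hP, hP]
        omega
      · rintro (⟨hx, hy⟩ | ⟨hx, hy⟩)
        · exact (hadjA y (Finset.mem_compl.mpr hy) x hx).symm
        · exact hadjA x (Finset.mem_compl.mpr hx) y hy
    have hAcard : Fintype.card {x // x ∈ P v} = (n - 1) / 2 := by
      rw [Fintype.card_coe]
      omega
    have hBcard : Fintype.card {x // ¬ x ∈ P v} = (n + 1) / 2 := by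
      rw [Fintype.card_subtype_compl]
      rw [Fintype.card_coe]
      omega
    let eA : {x // x ∈ P v} ≃ Fin ((n - 1) / 2) := Fintype.equivFinOfCardEq hAcard
    let eB : {x // ¬ x ∈ P v} ≃ Fin ((n + 1) / 2) := Fintype.equivFinOfCardEq hBcard
    let e : V ≃ Fin ((n - 1) / 2) ⊕ Fin ((n + 1) / 2) :=
      (Equiv.sumCompl (· ∈ P v)).symm.trans (Equiv.sumCongr eA eB)
    refine ⟨⟨e, ?_⟩⟩
    intro x y
    rw [hchar x y]
    by_cases hx : x ∈ P v <;> by_cases hy : y ∈ P v <;>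
      simp [e, Equiv.sumCompl_symm_apply_of_pos, Equiv.sumCompl_symm_apply_of_neg,
        hx, hy, completeBipartiteGraph]
  · -- backward direction
    rintro ⟨e⟩
    have hcards : n = (n - 1) / 2 + (n + 1) / 2 := by
      have h0 := Fintype.card_congr e.toEquiv
      simpa [Fintype.card_sum] using h0
    set a := (n - 1) / 2 with ha'
    set b := (n + 1) / 2 with hb'
    have ha2 : 2 ≤ a := by omega
    have hb : b = a + 1 := by omega
    let i0 : Fin a := ⟨0, by omega⟩
    let j0 : Fin b := ⟨0, by omega⟩
    set K := completeBipartiteGraph (Fin a) (Fin b) with hK'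
    refine ⟨e.symm (Sum.inl i0), ?_⟩
    have htr : transmission G (e.symm (Sum.inl i0)) = transmission K (Sum.inl i0) := by
      have h0 := transmission_iso e (e.symm (Sum.inl i0))
      simpa using h0.symm
    have hinr : ∀ j : Fin b, K.dist (Sum.inl i0) (Sum.inr j) = 1 := fun j =>
      SimpleGraph.dist_eq_one_iff_adj.mpr (by simp [hK', completeBipartiteGraph])
    have hinl : ∀ j : Fin a, j ≠ i0 → K.dist (Sum.inl i0) (Sum.inl j) = 2 := by
      intro j hj
      have hadj1 : K.Adj (Sum.inl i0) (Sum.inr j0) := by simp [hK', completeBipartiteGraph]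
      have hadj2 : K.Adj (Sum.inr j0) (Sum.inl j) := by simp [hK', completeBipartiteGraph]
      have hw : K.dist (Sum.inl i0) (Sum.inl j) ≤ 2 := by
        have h0 := SimpleGraph.dist_le
          (SimpleGraph.Walk.cons hadj1 (SimpleGraph.Walk.cons hadj2 SimpleGraph.Walk.nil))
        simpa using h0
      have hr : K.Reachable (Sum.inl i0) (Sum.inl j) :=
        (SimpleGraph.Walk.cons hadj1
          (SimpleGraph.Walk.cons hadj2 SimpleGraph.Walk.nil)).reachable
      have hne : (Sum.inl i0 : Fin a ⊕ Fin b) ≠ Sum.inl j := by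
        simp [hj.symm]
      have hpos := hr.pos_dist_of_ne hne
      have h1 : K.dist (Sum.inl i0) (Sum.inl j) ≠ 1 := by
        intro h
        have h2 := SimpleGraph.dist_eq_one_iff_adj.mp h
        simp [hK', completeBipartiteGraph] at h2
      omega
    have hKtr : transmission K (Sum.inl i0) = 2 * (a - 1) + b := by
      unfold transmission
      rw [Fintype.sum_sum_type]
      have hsumr : ∑ j : Fin b, K.dist (Sum.inl i0) (Sum.inr j) = b := by
        simp [hinr]
      have hsuml : ∑ j : Fin a, K.dist (Sum.inl i0) (Sum.inl j) = 2 * (a - 1) := by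
        rw [← Finset.sum_erase_add _ _ (Finset.mem_univ i0), SimpleGraph.dist_self, add_zero]
        rw [Finset.sum_congr rfl (fun j hj => hinl j (Finset.ne_of_mem_erase hj))]
        rw [Finset.sum_const, Finset.card_erase_of_mem (Finset.mem_univ i0),
          Finset.card_univ, Fintype.card_fin, smul_eq_mul]
        omega
      rw [hsumr, hsuml]
    rw [htr, hKtr]
    omega
end

section
/- For every odd integer n ≥ 5, the hatted cycle G_n is a stepwise transmission irregular (STI) graph. -/
open Finset

variable {V : Type*}

namespace HCAux

/-- distance on the (2k)-cycle -/
def dC (k a b : ℕ) : ℕ := min ((a - b) + (b - a)) (2*k - ((a - b) + (b - a)))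

/-- distance from a cycle vertex to the set {0,2} -/
def f (k j : ℕ) : ℕ := if j ≤ 1 then j else min (j - 2) (2*k - j)

/-- the claimed distance function on the hatted cycle (apex has index 2k) -/
def d (k a b : ℕ) : ℕ :=
  if a = 2*k then (if b = 2*k then 0 else 1 + f k b)
  else if b = 2*k then 1 + f k a
  else dC k a b

def relN (k a b : ℕ) : Prop :=
  (b = a + 1 ∧ b ≤ 2*k - 1) ∨ (a = 0 ∧ b = 2*k - 1) ∨ (a = 2*k ∧ (b = 0 ∨ b = 2))

def adjN (k a b : ℕ) : Prop := a ≠ b ∧ (relN k a b ∨ relN k b a)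

lemma d_self (k a : ℕ) : d k a a = 0 := by
  simp only [d, dC, f]; split_ifs <;> omega

lemma adj_iff (k : ℕ) (x y : Fin (2*k+1)) :
    (hattedCycle (2*k+1)).Adj x y ↔ adjN k x.val y.val := by
  have hx := x.isLt; have hy := y.isLt
  simp only [hattedCycle, SimpleGraph.fromRel_adj, adjN, relN, ne_eq, Fin.ext_iff]
  omega

lemma step (k : ℕ) (hk : 2 ≤ k) {a b w : ℕ} (ha : a < 2*k+1) (hb : b < 2*k+1)
    (hw : w < 2*k+1) (h : adjN k a b) : d k a w ≤ d k b w + 1 := by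
  obtain ⟨hne, hr⟩ := h
  simp only [relN] at hr
  simp only [d, dC, f]
  split_ifs <;> omega

lemma descent (k : ℕ) (hk : 2 ≤ k) {a w : ℕ} (ha : a < 2*k+1) (hw : w < 2*k+1)
    (hne : a ≠ w) : ∃ b, b < 2*k+1 ∧ adjN k a b ∧ d k b w < d k a w := by
  by_cases hA : a = 2*k
  · subst hA
    by_cases h1 : 2 ≤ w ∧ w - 2 ≤ 2*k - w
    · exact ⟨2, by omega, by unfold adjN relN; omega,
        by simp only [d, dC, f]; split_ifs <;> omega⟩
    · exact ⟨0, by omega, by unfold adjN relN; omega,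
        by simp only [d, dC, f]; split_ifs <;> omega⟩
  · by_cases hW : w = 2*k
    · subst hW
      by_cases h1 : a = 0 ∨ a = 2
      · exact ⟨2*k, by omega, by unfold adjN relN; omega,
          by simp only [d, dC, f]; split_ifs <;> omega⟩
      · by_cases h2 : a ≤ 1 ∨ a - 2 ≤ 2*k - a
        · exact ⟨a - 1, by omega, by unfold adjN relN; omega,
            by simp only [d, dC, f]; split_ifs <;> omega⟩
        · by_cases h3 : a = 2*k - 1
          · exact ⟨0, by omega, by unfold adjN relN; omega,
              by simp only [d, dC, f]; split_ifs <;> omega⟩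
          · exact ⟨a + 1, by omega, by unfold adjN relN; omega,
              by simp only [d, dC, f]; split_ifs <;> omega⟩
    · -- both a and w are cycle vertices
      by_cases h0 : a < w
      · by_cases h1 : w - a ≤ 2*k - (w - a)
        · exact ⟨a + 1, by omega, by unfold adjN relN; omega,
            by simp only [d, dC, f]; split_ifs <;> omega⟩
        · by_cases h2 : a = 0
          · exact ⟨2*k - 1, by omega, by unfold adjN relN; omega,
              by simp only [d, dC, f]; split_ifs <;> omega⟩
          · exact ⟨a - 1, by omega, by unfold adjN relN; omega,
              by simp only [d, dC, f]; split_ifs <;> omega⟩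
      · by_cases h1 : a - w ≤ 2*k - (a - w)
        · exact ⟨a - 1, by omega, by unfold adjN relN; omega,
            by simp only [d, dC, f]; split_ifs <;> omega⟩
        · by_cases h2 : a = 2*k - 1
          · exact ⟨0, by omega, by unfold adjN relN; omega,
              by simp only [d, dC, f]; split_ifs <;> omega⟩
          · exact ⟨a + 1, by omega, by unfold adjN relN; omega,
              by simp only [d, dC, f]; split_ifs <;> omega⟩

lemma walk_ge (k : ℕ) (hk : 2 ≤ k) {x y : Fin (2*k+1)}
    (p : (hattedCycle (2*k+1)).Walk x y) : d k x.val y.val ≤ p.length := by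
  induction p with
  | nil => simp [d_self]
  | @cons u v w h p ih =>
      have hadj := (adj_iff k _ _).1 h
      have hs := step k hk u.isLt v.isLt w.isLt hadj
      simp only [SimpleGraph.Walk.length_cons]
      omega

lemma reach_aux (k : ℕ) (hk : 2 ≤ k) :
    ∀ (N : ℕ) (x y : Fin (2*k+1)), d k x.val y.val ≤ N →
    (hattedCycle (2*k+1)).Reachable x y ∧
      (hattedCycle (2*k+1)).dist x y ≤ d k x.val y.val := by
  intro N
  induction N with
  | zero =>
    intro x y h
    have hxy : x = y := by
      by_contra hne
      obtain ⟨b, hb, _, hlt⟩ := descent k hk x.isLt y.isLt (fun hc => hne (Fin.ext hc))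
      omega
    subst hxy
    exact ⟨SimpleGraph.Reachable.refl x, by simp [SimpleGraph.dist_self]⟩
  | succ N ih =>
    intro x y h
    by_cases hxy : x = y
    · subst hxy
      exact ⟨SimpleGraph.Reachable.refl x, by simp [SimpleGraph.dist_self]⟩
    · obtain ⟨b, hb, hadjN, hlt⟩ := descent k hk x.isLt y.isLt (fun hc => hxy (Fin.ext hc))
      have hadj : (hattedCycle (2*k+1)).Adj x ⟨b, hb⟩ := (adj_iff k x ⟨b, hb⟩).2 hadjN
      obtain ⟨hr, hd⟩ := ih ⟨b, hb⟩ y (show d k b y.val ≤ N by omega)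
      refine ⟨hadj.reachable.trans hr, ?_⟩
      obtain ⟨q, hq⟩ := hr.exists_walk_length_eq_dist
      have hd' : (hattedCycle (2*k+1)).dist ⟨b, hb⟩ y ≤ d k b y.val := hd
      have hle := SimpleGraph.dist_le (SimpleGraph.Walk.cons hadj q)
      simp only [SimpleGraph.Walk.length_cons] at hle
      omega

lemma dist_eq (k : ℕ) (hk : 2 ≤ k) (x y : Fin (2*k+1)) :
    (hattedCycle (2*k+1)).dist x y = d k x.val y.val := by
  obtain ⟨hr, hle⟩ := reach_aux k hk (d k x.val y.val) x y le_rfl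
  refine le_antisymm hle ?_
  obtain ⟨p, hp⟩ := hr.exists_walk_length_eq_dist
  have := walk_ge k hk p
  omega

lemma sum_min (t : ℕ) : ∑ j ∈ range (2*(t+1)), min j (2*(t+1) - j) = (t+1)*(t+1) := by
  have hsplit : (∑ j ∈ Ico 0 (t+1), min j (2*(t+1) - j))
      + ∑ j ∈ Ico (t+1) (2*(t+1)), min j (2*(t+1) - j)
      = ∑ j ∈ Ico 0 (2*(t+1)), min j (2*(t+1) - j) :=
    Finset.sum_Ico_consecutive _ (Nat.zero_le _) (by omega)
  rw [Finset.range_eq_Ico, ← hsplit]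
  have h1 : ∑ j ∈ Ico 0 (t+1), min j (2*(t+1) - j) = ∑ j ∈ range (t+1), j := by
    rw [← Finset.range_eq_Ico]
    refine Finset.sum_congr rfl fun j hj => ?_
    rw [Finset.mem_range] at hj; omega
  have h2 : ∑ j ∈ Ico (t+1) (2*(t+1)), min j (2*(t+1) - j)
      = ∑ i ∈ range (t+1), (t+1-i) := by
    rw [Finset.sum_Ico_eq_sum_range]
    have e : 2*(t+1) - (t+1) = t+1 := by omega
    rw [e]
    refine Finset.sum_congr rfl fun i hi => ?_
    rw [Finset.mem_range] at hi; omega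
  have h3 : ∑ i ∈ range (t+1), (t+1-i) = ∑ i ∈ range (t+1), (i+1) := by
    rw [← Finset.sum_range_reflect (fun i => i + 1) (t+1)]
    refine Finset.sum_congr rfl fun i hi => ?_
    rw [Finset.mem_range] at hi; omega
  have h4 : ∑ i ∈ range (t+1), (i+1) = (∑ i ∈ range (t+1), i) + (t+1) := by
    rw [Finset.sum_add_distrib, Finset.sum_const, Finset.card_range, smul_eq_mul, mul_one]
  have hG := Finset.sum_range_id_mul_two (t+1)
  rw [h1, h2, h3, h4]
  have e1 : (t+1) * ((t+1) - 1) = t*t + t := by rw [Nat.add_sub_cancel]; ring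
  have e2 : (t+1)*(t+1) = t*t + t + t + 1 := by ring
  rw [e1] at hG
  rw [e2]
  generalize t*t = s at hG ⊢
  omega

lemma sum_f (k : ℕ) (hk : 2 ≤ k) : ∑ j ∈ range (2*k), f k j = (k-1)*(k-1) + 1 := by
  obtain ⟨t, rfl⟩ : ∃ t, k = t + 2 := ⟨k-2, by omega⟩
  have h2 : 2*(t+2) = (2*(t+1)) + 1 + 1 := by omega
  rw [h2, Finset.sum_range_succ', Finset.sum_range_succ']
  have hc : ∀ j, f (t+2) (j + 1 + 1) = min j (2*(t+1) - j) := by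
    intro j; simp only [f]; split_ifs <;> omega
  rw [Finset.sum_congr rfl (fun j _ => hc j), sum_min t]
  have hf1 : f (t+2) (0+1) = 1 := by simp [f]
  have hf0 : f (t+2) 0 = 0 := by simp [f]
  rw [hf1, hf0]
  have e : t + 2 - 1 = t + 1 := by omega
  rw [e]

lemma sum_dC (k : ℕ) (hk : 2 ≤ k) {v : ℕ} (hv : v < 2*k) :
    ∑ j ∈ range (2*k), dC k v j = k*k := by
  obtain ⟨t, rfl⟩ : ∃ t, k = t + 1 := ⟨k-1, by omega⟩
  rw [← sum_min t]
  set m := 2*(t+1) with hm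
  refine (Finset.sum_nbij' (i := fun x => (v + x) % m) (j := fun x => (x + (m - v)) % m)
    ?_ ?_ ?_ ?_ ?_).symm
  · intro x hx
    rw [Finset.mem_range] at hx ⊢
    exact Nat.mod_lt _ (by omega)
  · intro x hx
    rw [Finset.mem_range] at hx ⊢
    exact Nat.mod_lt _ (by omega)
  · intro x hx
    rw [Finset.mem_range] at hx
    beta_reduce
    rw [Nat.mod_add_mod]
    have e : v + x + (m - v) = x + m := by omega
    rw [e, Nat.add_mod_right, Nat.mod_eq_of_lt hx]
  · intro x hx
    rw [Finset.mem_range] at hx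
    beta_reduce
    rw [Nat.add_comm v, Nat.mod_add_mod]
    have e : x + (m - v) + v = x + m := by omega
    rw [e, Nat.add_mod_right, Nat.mod_eq_of_lt hx]
  · intro x hx
    rw [Finset.mem_range] at hx
    beta_reduce
    by_cases h : v + x < m
    · rw [Nat.mod_eq_of_lt h]; simp only [dC]; omega
    · have he : (v + x) % m = v + x - m := by
        rw [Nat.mod_eq_sub_mod (by omega)]
        exact Nat.mod_eq_of_lt (by omega)
      rw [he]; simp only [dC]; omega

lemma tr_cycle (k : ℕ) (hk : 2 ≤ k) {v : ℕ} (hv : v < 2*k) :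
    ∑ j ∈ range (2*k+1), d k v j = k*k + 1 + f k v := by
  rw [Finset.sum_range_succ]
  have h1 : ∀ j ∈ range (2*k), d k v j = dC k v j := by
    intro j hj
    rw [Finset.mem_range] at hj
    simp only [d]; rw [if_neg (by omega), if_neg (by omega)]
  have h2 : d k v (2*k) = 1 + f k v := by
    simp only [d]; rw [if_neg (show ¬ v = 2*k by omega)]; simp
  rw [Finset.sum_congr rfl h1, sum_dC k hk hv, h2]
  ring

lemma tr_apex (k : ℕ) (hk : 2 ≤ k) :
    ∑ j ∈ range (2*k+1), d k (2*k) j = k*k + 2 := by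
  rw [Finset.sum_range_succ]
  have h1 : ∀ j ∈ range (2*k), d k (2*k) j = 1 + f k j := by
    intro j hj
    rw [Finset.mem_range] at hj
    simp only [d, if_true]; rw [if_neg (show ¬ j = 2*k by omega)]
  have h2 : d k (2*k) (2*k) = 0 := by simp [d]
  rw [Finset.sum_congr rfl h1, h2, Finset.sum_add_distrib, Finset.sum_const,
    Finset.card_range, sum_f k hk, smul_eq_mul, mul_one]
  obtain ⟨t, rfl⟩ : ∃ t, k = t + 2 := ⟨k-2, by omega⟩
  have e : t + 2 - 1 = t + 1 := by omega
  rw [e]; ring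

lemma f_adj (k : ℕ) (hk : 2 ≤ k) {a b : ℕ} (ha : a < 2*k) (hb : b < 2*k)
    (h : adjN k a b) : f k a + 1 = f k b ∨ f k b + 1 = f k a := by
  obtain ⟨hne, hr⟩ := h
  simp only [relN] at hr
  simp only [f]
  split_ifs <;> omega

end HCAux

theorem hattedCycle_isSTI (n : ℕ) (hn : 5 ≤ n) (hodd : Odd n) :
    IsSTI (hattedCycle n) := by
  obtain ⟨k, rfl⟩ : ∃ k, n = 2*k + 1 := by
    obtain ⟨m, hm⟩ := hodd; exact ⟨m, by omega⟩
  have hk : 2 ≤ k := by omega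
  constructor
  · exact (SimpleGraph.connected_iff _).2
      ⟨fun x y => (HCAux.reach_aux k hk _ x y le_rfl).1, ⟨⟨0, by omega⟩⟩⟩
  · intro x y hadj
    have hxy := (HCAux.adj_iff k x y).1 hadj
    have hx := x.isLt; have hy := y.isLt
    have hTx : transmission (hattedCycle (2*k+1)) x = ∑ j ∈ range (2*k+1), HCAux.d k x.val j := by
      unfold transmission
      rw [← Fin.sum_univ_eq_sum_range (fun j => HCAux.d k x.val j) (2*k+1)]
      exact Finset.sum_congr rfl fun u _ => HCAux.dist_eq k hk x u
    have hTy : transmission (hattedCycle (2*k+1)) y = ∑ j ∈ range (2*k+1), HCAux.d k y.val j := by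
      unfold transmission
      rw [← Fin.sum_univ_eq_sum_range (fun j => HCAux.d k y.val j) (2*k+1)]
      exact Finset.sum_congr rfl fun u _ => HCAux.dist_eq k hk y u
    rw [hTx, hTy]
    by_cases hax : x.val = 2*k
    · have hb02 : y.val = 0 ∨ y.val = 2 := by
        obtain ⟨hne, hr⟩ := hxy
        simp only [HCAux.relN] at hr
        omega
      have hfy : HCAux.f k y.val = 0 := by
        simp only [HCAux.f]; split_ifs <;> omega
      rw [hax, HCAux.tr_apex k hk, HCAux.tr_cycle k hk (by omega : y.val < 2*k), hfy]
      push_cast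
      generalize (k*k : ℤ) = s
      omega
    · by_cases hay : y.val = 2*k
      · have hb02 : x.val = 0 ∨ x.val = 2 := by
          obtain ⟨hne, hr⟩ := hxy
          simp only [HCAux.relN] at hr
          omega
        have hfx : HCAux.f k x.val = 0 := by
          simp only [HCAux.f]; split_ifs <;> omega
        rw [hay, HCAux.tr_apex k hk, HCAux.tr_cycle k hk (by omega : x.val < 2*k), hfx]
        push_cast
        generalize (k*k : ℤ) = s
        omega
      · have hxc : x.val < 2*k := by omega
        have hyc : y.val < 2*k := by omega
        have hf := HCAux.f_adj k hk hxc hyc hxy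
        rw [HCAux.tr_cycle k hk hxc, HCAux.tr_cycle k hk hyc]
        push_cast
        generalize (k*k : ℤ) = s
        omega
end

section
/- For every odd integer n ≥ 3, the balanced complete bipartite graph K_{(n−1)/2,(n+1)/2} is a stepwise transmission irregular (STI) graph. -/
open Finset

variable {V : Type*}

section Aux

variable {a b : ℕ}

private lemma cb_dist_lr (i : Fin a) (j : Fin b) :
    (completeBipartiteGraph (Fin a) (Fin b)).dist (Sum.inl i) (Sum.inr j) = 1 :=
  SimpleGraph.dist_eq_one_iff_adj.mpr (by simp)

private lemma cb_dist_rl (j : Fin b) (i : Fin a) :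
    (completeBipartiteGraph (Fin a) (Fin b)).dist (Sum.inr j) (Sum.inl i) = 1 :=
  SimpleGraph.dist_eq_one_iff_adj.mpr (by simp)

private lemma cb_dist_ll (hb : 0 < b) {i k : Fin a} (hik : i ≠ k) :
    (completeBipartiteGraph (Fin a) (Fin b)).dist (Sum.inl i) (Sum.inl k) = 2 := by
  set G := completeBipartiteGraph (Fin a) (Fin b)
  have h1 : G.Adj (Sum.inl i) (Sum.inr ⟨0, hb⟩) := by simp [G]
  have h2 : G.Adj (Sum.inr ⟨0, hb⟩) (Sum.inl k) := by simp [G]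
  let w : G.Walk (Sum.inl i) (Sum.inl k) := SimpleGraph.Walk.cons h1 (SimpleGraph.Walk.cons h2 SimpleGraph.Walk.nil)
  have hle : G.dist (Sum.inl i) (Sum.inl k) ≤ 2 := by
    have := SimpleGraph.dist_le w
    simpa [w] using this
  have hreach : G.Reachable (Sum.inl i) (Sum.inl k) := ⟨w⟩
  have h0 : G.dist (Sum.inl i) (Sum.inl k) ≠ 0 := by
    intro h
    exact (hik (by simpa using hreach.dist_eq_zero_iff.mp h))
  have hne1 : G.dist (Sum.inl i) (Sum.inl k) ≠ 1 := by
    intro h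
    have := SimpleGraph.dist_eq_one_iff_adj.mp h
    simp [G] at this
  omega

private lemma cb_dist_rr (ha : 0 < a) {j l : Fin b} (hjl : j ≠ l) :
    (completeBipartiteGraph (Fin a) (Fin b)).dist (Sum.inr j) (Sum.inr l) = 2 := by
  set G := completeBipartiteGraph (Fin a) (Fin b)
  have h1 : G.Adj (Sum.inr j) (Sum.inl ⟨0, ha⟩) := by simp [G]
  have h2 : G.Adj (Sum.inl ⟨0, ha⟩) (Sum.inr l) := by simp [G]
  let w : G.Walk (Sum.inr j) (Sum.inr l) := SimpleGraph.Walk.cons h1 (SimpleGraph.Walk.cons h2 SimpleGraph.Walk.nil)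
  have hle : G.dist (Sum.inr j) (Sum.inr l) ≤ 2 := by
    have := SimpleGraph.dist_le w
    simpa [w] using this
  have hreach : G.Reachable (Sum.inr j) (Sum.inr l) := ⟨w⟩
  have h0 : G.dist (Sum.inr j) (Sum.inr l) ≠ 0 := by
    intro h
    exact (hjl (by simpa using hreach.dist_eq_zero_iff.mp h))
  have hne1 : G.dist (Sum.inr j) (Sum.inr l) ≠ 1 := by
    intro h
    have := SimpleGraph.dist_eq_one_iff_adj.mp h
    simp [G] at this
  omega

private lemma cb_trans_left (ha : 0 < a) (hb : 0 < b) (i : Fin a) :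
    transmission (completeBipartiteGraph (Fin a) (Fin b)) (Sum.inl i) = 2 * (a - 1) + b := by
  set G := completeBipartiteGraph (Fin a) (Fin b)
  unfold transmission
  rw [Fintype.sum_sum_type]
  have hL : ∑ k : Fin a, G.dist (Sum.inl i) (Sum.inl k) = 2 * (a - 1) := by
    rw [← Finset.sum_erase_add _ _ (Finset.mem_univ i)]
    rw [SimpleGraph.dist_self]
    rw [Finset.sum_congr rfl (fun k hk => cb_dist_ll hb (Ne.symm (Finset.ne_of_mem_erase hk)))]
    simp [Finset.card_erase_of_mem, mul_comm]
  have hR : ∑ j : Fin b, G.dist (Sum.inl i) (Sum.inr j) = b := by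
    rw [Finset.sum_congr rfl (fun j _ => cb_dist_lr i j)]
    simp
  rw [hL, hR]

private lemma cb_trans_right (ha : 0 < a) (hb : 0 < b) (j : Fin b) :
    transmission (completeBipartiteGraph (Fin a) (Fin b)) (Sum.inr j) = 2 * (b - 1) + a := by
  set G := completeBipartiteGraph (Fin a) (Fin b)
  unfold transmission
  rw [Fintype.sum_sum_type]
  have hL : ∑ i : Fin a, G.dist (Sum.inr j) (Sum.inl i) = a := by
    rw [Finset.sum_congr rfl (fun i _ => cb_dist_rl j i)]
    simp
  have hR : ∑ l : Fin b, G.dist (Sum.inr j) (Sum.inr l) = 2 * (b - 1) := by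
    rw [← Finset.sum_erase_add _ _ (Finset.mem_univ j)]
    rw [SimpleGraph.dist_self]
    rw [Finset.sum_congr rfl (fun l hl => cb_dist_rr ha (Ne.symm (Finset.ne_of_mem_erase hl)))]
    simp [Finset.card_erase_of_mem, mul_comm]
  rw [hL, hR]
  omega

private lemma cb_connected (ha : 0 < a) (hb : 0 < b) :
    (completeBipartiteGraph (Fin a) (Fin b)).Connected := by
  set G := completeBipartiteGraph (Fin a) (Fin b)
  have key : ∀ u : Fin a ⊕ Fin b, G.Reachable u (Sum.inr ⟨0, hb⟩) := by
    intro u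
    cases u with
    | inl i => exact (show G.Adj (Sum.inl i) (Sum.inr ⟨0, hb⟩) by simp [G]).reachable
    | inr j =>
      exact ((show G.Adj (Sum.inr j) (Sum.inl ⟨0, ha⟩) by simp [G]).reachable).trans
        (show G.Adj (Sum.inl ⟨0, ha⟩) (Sum.inr ⟨0, hb⟩) by simp [G]).reachable
  haveI : Nonempty (Fin a ⊕ Fin b) := ⟨Sum.inr ⟨0, hb⟩⟩
  exact SimpleGraph.Connected.mk fun u v => (key u).trans (key v).symm

private lemma aux_sti (m : ℕ) (hm : 1 ≤ m) :
    IsSTI (completeBipartiteGraph (Fin m) (Fin (m + 1))) := by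
  have ha : 0 < m := hm
  have hb : 0 < m + 1 := Nat.succ_pos m
  refine ⟨cb_connected ha hb, ?_⟩
  intro u v huv
  have tl : ∀ i : Fin m, transmission (completeBipartiteGraph (Fin m) (Fin (m+1))) (Sum.inl i)
      = 2 * (m - 1) + (m + 1) := fun i => cb_trans_left ha hb i
  have tr : ∀ j : Fin (m+1), transmission (completeBipartiteGraph (Fin m) (Fin (m+1))) (Sum.inr j)
      = 2 * m + m := fun j => by rw [cb_trans_right ha hb j]; omega
  cases u with
  | inl i =>
    cases v with
    | inl k => simp at huv
    | inr j =>
      rw [tl i, tr j]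
      omega
  | inr j =>
    cases v with
    | inl i =>
      rw [tl i, tr j]
      omega
    | inr l => simp at huv

end Aux

theorem completeBipartite_isSTI (n : ℕ) (hn : 3 ≤ n) (hodd : Odd n) :
    IsSTI (completeBipartiteGraph (Fin ((n - 1) / 2)) (Fin ((n + 1) / 2))) := by
  obtain ⟨m, hmn⟩ := hodd
  have h1 : (n - 1) / 2 = m := by omega
  have h2 : (n + 1) / 2 = m + 1 := by omega
  rw [h1, h2]
  exact aux_sti m (by omega)
end

section
/- For every odd integer n ≥ 5, the Wiener index of the hatted cycle G_n equals (n³ − n² − n + 17)/8. -/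
open Finset

variable {V : Type*}

namespace HatAux

def cyc (m a b : ℕ) : ℕ := min (max a b - min a b) (m - (max a b - min a b))

def dN (n a b : ℕ) : ℕ :=
  if a = n - 1 then (if b = n - 1 then 0
    else 1 + min (cyc (n-1) 0 b) (cyc (n-1) 2 b))
  else if b = n - 1 then 1 + min (cyc (n-1) 0 a) (cyc (n-1) 2 a)
  else cyc (n-1) a b

lemma sumsucc (k : ℕ) : 2 * ∑ j ∈ range k, (j+1) = k * (k+1) := by
  induction k with
  | zero => rfl
  | succ k ih =>
    calc 2 * ∑ j ∈ range (k+1), (j+1) = 2 * ∑ j ∈ range k, (j+1) + 2*(k+1) := by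
          rw [Finset.sum_range_succ]; ring
      _ = k*(k+1) + 2*(k+1) := by rw [ih]
      _ = (k+1)*(k+2) := by ring

lemma sumid (k : ℕ) : 2 * ∑ j ∈ range k, j + 2 * k = k * (k+1) := by
  induction k with
  | zero => rfl
  | succ k ih =>
    calc 2 * ∑ j ∈ range (k+1), j + 2*(k+1)
        = (2 * ∑ j ∈ range k, j + 2*k) + (2*k + 2) := by rw [Finset.sum_range_succ]; ring
      _ = k*(k+1) + (2*k+2) := by rw [ih]
      _ = (k+1)*(k+2) := by ring

lemma sumB (t : ℕ) (ht : 2 ≤ t) : ∑ b ∈ range (2*t), min b (2*t - b) = t * t := by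
  have hsplit : ∑ b ∈ range t, min b (2*t - b) + ∑ b ∈ Ico t (2*t), min b (2*t - b)
      = ∑ b ∈ range (2*t), min b (2*t - b) := by
    rw [← Nat.Ico_zero_eq_range, ← Nat.Ico_zero_eq_range]
    exact Finset.sum_Ico_consecutive _ (Nat.zero_le t) (by omega)
  have h1 : ∑ b ∈ range t, min b (2*t - b) = ∑ b ∈ range t, b :=
    Finset.sum_congr rfl (fun b hb => by simp only [mem_range] at hb; omega)
  have h2 : ∑ b ∈ Ico t (2*t), min b (2*t - b) = ∑ j ∈ range t, min (t+j) (2*t - (t+j)) := by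
    rw [Finset.sum_Ico_eq_sum_range, show 2*t-t = t by omega]
  have h3 : ∑ j ∈ range t, min (t+j) (2*t - (t+j)) = ∑ j ∈ range t, (t - j) :=
    Finset.sum_congr rfl (fun b hb => by simp only [mem_range] at hb; omega)
  have h4 : ∑ j ∈ range t, (t - j) = ∑ j ∈ range t, (j + 1) := by
    rw [← Finset.sum_range_reflect]
    exact Finset.sum_congr rfl (fun b hb => by simp only [mem_range] at hb; omega)
  have g1 := sumid t
  have g2 := sumsucc t
  refine Nat.eq_of_mul_eq_mul_left (show 0 < 2 by norm_num) ?_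
  rw [← hsplit, h1, h2, h3, h4, Nat.mul_add]
  ring_nf
  ring_nf at g1 g2
  linarith

lemma sumG (s : ℕ) :
    ∑ b ∈ range (2*(s+2)), min (cyc (2*(s+2)) 0 b) (cyc (2*(s+2)) 2 b)
      = (s+1)*(s+1) + 1 := by
  set m := 2*(s+2) with hm
  have hs1 : ∑ b ∈ Ico 0 (s+4), (fun b => min (cyc m 0 b) (cyc m 2 b)) b
      + ∑ b ∈ Ico (s+4) m, (fun b => min (cyc m 0 b) (cyc m 2 b)) b
      = ∑ b ∈ range m, min (cyc m 0 b) (cyc m 2 b) := by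
    rw [← Nat.Ico_zero_eq_range]
    exact Finset.sum_Ico_consecutive _ (Nat.zero_le _) (by omega)
  have hs2 : ∑ b ∈ Ico 0 2, (fun b => min (cyc m 0 b) (cyc m 2 b)) b
      + ∑ b ∈ Ico 2 (s+4), (fun b => min (cyc m 0 b) (cyc m 2 b)) b
      = ∑ b ∈ Ico 0 (s+4), (fun b => min (cyc m 0 b) (cyc m 2 b)) b :=
    Finset.sum_Ico_consecutive _ (by omega) (by omega)
  have hA : ∑ b ∈ Ico 0 2, (fun b => min (cyc m 0 b) (cyc m 2 b)) b = 1 := by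
    rw [Nat.Ico_zero_eq_range]
    rw [Finset.sum_range_succ, Finset.sum_range_succ, Finset.sum_range_zero]
    simp only [cyc]
    omega
  have hB : ∑ b ∈ Ico 2 (s+4), (fun b => min (cyc m 0 b) (cyc m 2 b)) b
      = ∑ j ∈ range (s+2), j := by
    rw [Finset.sum_Ico_eq_sum_range, show s+4-2 = s+2 by omega]
    refine Finset.sum_congr rfl (fun b hb => ?_)
    simp only [mem_range] at hb
    simp only [cyc]; omega
  have hC : ∑ b ∈ Ico (s+4) m, (fun b => min (cyc m 0 b) (cyc m 2 b)) b
      = ∑ j ∈ range s, (j+1) := by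
    rw [Finset.sum_Ico_eq_sum_range, show m-(s+4) = s by omega]
    rw [← Finset.sum_range_reflect]
    refine Finset.sum_congr rfl (fun b hb => ?_)
    simp only [mem_range] at hb
    simp only [cyc]; omega
  have g1 := sumid (s+2)
  have g2 := sumsucc s
  refine Nat.eq_of_mul_eq_mul_left (show 0 < 2 by norm_num) ?_
  rw [← hs1, ← hs2, hA, hB, hC]
  ring_nf
  ring_nf at g1 g2
  linarith

lemma modval (x m : ℕ) (hm : 0 < m) (h : x < 2*m) :
    x % m = if x < m then x else x - m := by
  split_ifs with h1
  · exact Nat.mod_eq_of_lt h1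
  · rw [Nat.mod_eq_sub_mod (by omega)]
    exact Nat.mod_eq_of_lt (by omega)

lemma rowsum (m a : ℕ) (hm : 4 ≤ m) (ha : a < m) :
    ∑ b ∈ range m, cyc m a b = ∑ b ∈ range m, min b (m - b) := by
  refine (Finset.sum_nbij' (i := fun b => (a + b) % m) (j := fun c => (c + m - a) % m)
    ?_ ?_ ?_ ?_ ?_).symm
  · intro b hb; simp only [mem_range] at *
    exact Nat.mod_lt _ (by omega)
  · intro c hc; simp only [mem_range] at *
    exact Nat.mod_lt _ (by omega)
  · intro b hb; simp only [mem_range] at hb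
    rw [modval (a+b) m (by omega) (by omega)]
    split_ifs with h1
    · rw [modval _ m (by omega) (by omega)]; split_ifs <;> omega
    · rw [modval _ m (by omega) (by omega)]; split_ifs <;> omega
  · intro c hc; simp only [mem_range] at hc
    rw [modval (c+m-a) m (by omega) (by omega)]
    split_ifs with h1
    · rw [modval _ m (by omega) (by omega)]; split_ifs <;> omega
    · rw [modval _ m (by omega) (by omega)]; split_ifs <;> omega
  · intro b hb; simp only [mem_range] at hb
    rw [modval (a+b) m (by omega) (by omega)]
    unfold cyc
    split_ifs with h1 <;> omega

lemma cyc_comm (m a b : ℕ) : cyc m a b = cyc m b a := by unfold cyc; omega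
lemma dN_comm (n a b : ℕ) : dN n a b = dN n b a := by
  unfold dN; split_ifs <;> simp_all [cyc_comm]
lemma dN_self (n a : ℕ) : dN n a a = 0 := by unfold dN cyc; split_ifs <;> omega

section Graph
variable {n : ℕ} (hn : 5 ≤ n)

lemma adj_cases {u v : Fin n} (h : (hattedCycle n).Adj u v) :
    (u.val < n-1 ∧ v.val < n-1 ∧ (v.val = u.val + 1 ∨ u.val = v.val + 1 ∨
      (u.val = 0 ∧ v.val = n-2) ∨ (v.val = 0 ∧ u.val = n-2)))
    ∨ (u.val = n-1 ∧ (v.val = 0 ∨ v.val = 2))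
    ∨ (v.val = n-1 ∧ (u.val = 0 ∨ u.val = 2)) := by
  rw [hattedCycle, SimpleGraph.fromRel_adj] at h
  obtain ⟨hne, h⟩ := h
  have h1 := u.isLt
  have h2 := v.isLt
  have h3 : u.val ≠ v.val := fun hh => hne (Fin.ext hh)
  omega

lemma adj_succ (a : ℕ) (h : a + 1 ≤ n - 2) :
    (hattedCycle n).Adj ⟨a, by omega⟩ ⟨a+1, by omega⟩ := by
  rw [hattedCycle, SimpleGraph.fromRel_adj]
  refine ⟨?_, Or.inl (Or.inl ⟨rfl, h⟩)⟩
  simp only [ne_eq, Fin.mk.injEq]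
  omega

lemma adj_wrap : (hattedCycle n).Adj ⟨0, by omega⟩ ⟨n-2, by omega⟩ := by
  rw [hattedCycle, SimpleGraph.fromRel_adj]
  refine ⟨?_, Or.inl (Or.inr (Or.inl ⟨rfl, rfl⟩))⟩
  simp only [ne_eq, Fin.mk.injEq]
  omega

lemma adj_hat0 : (hattedCycle n).Adj ⟨n-1, by omega⟩ ⟨0, by omega⟩ := by
  rw [hattedCycle, SimpleGraph.fromRel_adj]
  refine ⟨?_, Or.inl (Or.inr (Or.inr ⟨rfl, Or.inl rfl⟩))⟩
  simp only [ne_eq, Fin.mk.injEq]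
  omega

lemma adj_hat2 : (hattedCycle n).Adj ⟨n-1, by omega⟩ ⟨2, by omega⟩ := by
  rw [hattedCycle, SimpleGraph.fromRel_adj]
  refine ⟨?_, Or.inl (Or.inr (Or.inr ⟨rfl, Or.inr rfl⟩))⟩
  simp only [ne_eq, Fin.mk.injEq]
  omega

lemma dist_le_of_adj {u v : Fin n} (h : (hattedCycle n).Adj u v) :
    (hattedCycle n).dist u v ≤ 1 := by
  simpa using SimpleGraph.dist_le (SimpleGraph.Walk.cons h SimpleGraph.Walk.nil)

lemma reach : ∀ a : Fin n, (hattedCycle n).Reachable ⟨0, by omega⟩ a := by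
  suffices H : ∀ k (hk : k < n), (hattedCycle n).Reachable ⟨0, by omega⟩ ⟨k, hk⟩ by
    intro a; exact H a.val a.isLt
  intro k
  induction k with
  | zero => intro hk; exact SimpleGraph.Reachable.refl _
  | succ k ih =>
    intro hk
    by_cases hk2 : k + 1 ≤ n - 2
    · exact (ih (by omega)).trans (adj_succ hn k hk2).reachable
    · have hv : (⟨k+1, hk⟩ : Fin n) = ⟨n-1, by omega⟩ := Fin.ext (by simp; omega)
      rw [hv]
      exact ((adj_hat0 hn).symm.reachable)

include hn in
lemma conn : (hattedCycle n).Connected := by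
  rw [SimpleGraph.connected_iff]
  exact ⟨fun u v => ((reach hn u).symm.trans (reach hn v)), ⟨⟨0, by omega⟩⟩⟩

lemma nlt (hn : 5 ≤ n) : n - 1 < n := by omega
lemma zlt (hn : 5 ≤ n) : 0 < n := by omega
lemma tlt (hn : 5 ≤ n) : 2 < n := by omega
lemma wlt (hn : 5 ≤ n) : n - 2 < n := by omega

include hn in
lemma dist_chain : ∀ (k : ℕ) (a b : Fin n), b.val = a.val + k → b.val ≤ n-2 →
    (hattedCycle n).dist a b ≤ k := by
  intro k
  induction k with
  | zero =>
    intro a b h _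
    have : a = b := Fin.ext (by omega)
    subst this
    simp [SimpleGraph.dist_self]
  | succ k ih =>
    intro a b h h2
    have hlt : a.val + k + 1 < n := by omega
    have hb : b = ⟨a.val + k + 1, hlt⟩ := Fin.ext (by simp; omega)
    rw [hb]
    have step : (hattedCycle n).Adj ⟨a.val + k, by omega⟩ ⟨a.val + k + 1, hlt⟩ :=
      adj_succ hn (a.val + k) (by omega)
    calc (hattedCycle n).dist a ⟨a.val + k + 1, hlt⟩
        ≤ (hattedCycle n).dist a ⟨a.val + k, by omega⟩
          + (hattedCycle n).dist ⟨a.val + k, by omega⟩ ⟨a.val + k + 1, hlt⟩ :=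
          (conn hn).dist_triangle
      _ ≤ k + 1 := add_le_add (ih a _ rfl (by simp only [Fin.val_mk]; omega)) (dist_le_of_adj step)

include hn in
lemma dist_cyc_le' (a b : Fin n) (hab : a.val ≤ b.val) (hb : b.val < n-1) :
    (hattedCycle n).dist a b ≤ cyc (n-1) a.val b.val := by
  have h1 : (hattedCycle n).dist a b ≤ b.val - a.val :=
    dist_chain hn (b.val - a.val) a b (by omega) (by omega)
  have hz : (hattedCycle n).dist ⟨0, zlt hn⟩ a ≤ a.val :=
    dist_chain hn a.val ⟨0, zlt hn⟩ a (by simp only [Fin.val_mk]; omega) (by omega)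
  have hw : (hattedCycle n).dist b ⟨n-2, wlt hn⟩ ≤ (n-2) - b.val :=
    dist_chain hn ((n-2) - b.val) b ⟨n-2, wlt hn⟩ (by simp; omega) (by simp)
  have hwrap : (hattedCycle n).dist ⟨0, zlt hn⟩ ⟨n-2, wlt hn⟩ ≤ 1 :=
    dist_le_of_adj (adj_wrap hn)
  have hcz : (hattedCycle n).dist a ⟨0, zlt hn⟩ = (hattedCycle n).dist ⟨0, zlt hn⟩ a :=
    SimpleGraph.dist_comm
  have hcw : (hattedCycle n).dist ⟨n-2, wlt hn⟩ b = (hattedCycle n).dist b ⟨n-2, wlt hn⟩ :=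
    SimpleGraph.dist_comm
  have t1 : (hattedCycle n).dist a b
      ≤ (hattedCycle n).dist a ⟨0, zlt hn⟩ + (hattedCycle n).dist ⟨0, zlt hn⟩ b :=
    (conn hn).dist_triangle
  have t2 : (hattedCycle n).dist ⟨0, zlt hn⟩ b
      ≤ (hattedCycle n).dist ⟨0, zlt hn⟩ ⟨n-2, wlt hn⟩
        + (hattedCycle n).dist ⟨n-2, wlt hn⟩ b :=
    (conn hn).dist_triangle
  unfold cyc
  omega

include hn in
lemma dist_cyc_le (a b : Fin n) (ha : a.val < n-1) (hb : b.val < n-1) :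
    (hattedCycle n).dist a b ≤ cyc (n-1) a.val b.val := by
  rcases le_total a.val b.val with h | h
  · exact dist_cyc_le' hn a b h hb
  · rw [SimpleGraph.dist_comm, cyc_comm]
    exact dist_cyc_le' hn b a h ha

include hn in
lemma dist_hat_le (b : Fin n) (hb : b.val < n-1) :
    (hattedCycle n).dist ⟨n-1, nlt hn⟩ b
      ≤ 1 + min (cyc (n-1) 0 b.val) (cyc (n-1) 2 b.val) := by
  have h0 : (hattedCycle n).dist ⟨n-1, nlt hn⟩ ⟨0, zlt hn⟩ ≤ 1 :=
    dist_le_of_adj (adj_hat0 hn)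
  have h2 : (hattedCycle n).dist ⟨n-1, nlt hn⟩ ⟨2, tlt hn⟩ ≤ 1 :=
    dist_le_of_adj (adj_hat2 hn)
  have d0 : (hattedCycle n).dist ⟨0, zlt hn⟩ b ≤ cyc (n-1) 0 b.val :=
    dist_cyc_le hn ⟨0, zlt hn⟩ b (by simp only [Fin.val_mk]; omega) hb
  have d2 : (hattedCycle n).dist ⟨2, tlt hn⟩ b ≤ cyc (n-1) 2 b.val :=
    dist_cyc_le hn ⟨2, tlt hn⟩ b (by simp only [Fin.val_mk]; omega) hb
  have t0 : (hattedCycle n).dist ⟨n-1, nlt hn⟩ b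
      ≤ (hattedCycle n).dist ⟨n-1, nlt hn⟩ ⟨0, zlt hn⟩
        + (hattedCycle n).dist ⟨0, zlt hn⟩ b := (conn hn).dist_triangle
  have t2 : (hattedCycle n).dist ⟨n-1, nlt hn⟩ b
      ≤ (hattedCycle n).dist ⟨n-1, nlt hn⟩ ⟨2, tlt hn⟩
        + (hattedCycle n).dist ⟨2, tlt hn⟩ b := (conn hn).dist_triangle
  omega

include hn in
lemma dist_le_dN (u v : Fin n) : (hattedCycle n).dist u v ≤ dN n u.val v.val := by
  have hu' := u.isLt
  have hv' := v.isLt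
  by_cases hu : u.val = n-1 <;> by_cases hv : v.val = n-1
  · have : u = v := Fin.ext (by omega)
    subst this
    simp [SimpleGraph.dist_self]
  · simp only [dN, if_pos hu, if_neg hv]
    have hueq : u = ⟨n-1, nlt hn⟩ := Fin.ext hu
    rw [hueq]
    exact dist_hat_le hn v (by omega)
  · simp only [dN, if_neg hu, if_pos hv]
    have hveq : v = ⟨n-1, nlt hn⟩ := Fin.ext hv
    rw [hveq, SimpleGraph.dist_comm]
    exact dist_hat_le hn u (by omega)
  · simp only [dN, if_neg hu, if_neg hv]
    exact dist_cyc_le hn u v (by omega) (by omega)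

set_option maxHeartbeats 2000000 in
include hn in
lemma lip (x : Fin n) {u v : Fin n} (h : (hattedCycle n).Adj u v) :
    dN n x.val u.val ≤ dN n x.val v.val + 1 := by
  have hx := x.isLt
  have hu := u.isLt
  have hv := v.isLt
  have hc := adj_cases h
  rcases hc with ⟨h1, h2, h3⟩ | ⟨h1, h2⟩ | ⟨h1, h2⟩ <;>
    unfold dN cyc <;> split_ifs <;> omega

include hn in
lemma dN_le_length : ∀ {u v : Fin n} (p : (hattedCycle n).Walk u v),
    dN n u.val v.val ≤ p.length := by
  intro u v p
  induction p with
  | nil => simp [dN_self]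
  | @cons u w v h p ih =>
    have h1 : dN n u.val v.val ≤ dN n w.val v.val + 1 := by
      rw [dN_comm, dN_comm n w.val]
      exact lip hn v h
    rw [SimpleGraph.Walk.length_cons]
    omega

include hn in
lemma dist_eq (u v : Fin n) : (hattedCycle n).dist u v = dN n u.val v.val := by
  refine le_antisymm (dist_le_dN hn u v) ?_
  obtain ⟨p, hp⟩ := (conn hn).exists_walk_length_eq_dist u v
  rw [← hp]
  exact dN_le_length hn p

end Graph

lemma bigsum (s : ℕ) :
    ∑ a ∈ range (2*s+5), ∑ b ∈ range (2*s+5), dN (2*s+5) a b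
      = (2*s+4) * ((s+2)*(s+2)) + 2*(2*s+4) + 2*((s+1)*(s+1)+1) := by
  set N := 2*s+5 with hNdef
  have hN1 : N - 1 = 2*(s+2) := by omega
  have hd_hat : ∀ b < N-1, dN N (N-1) b
      = 1 + min (cyc (N-1) 0 b) (cyc (N-1) 2 b) := by
    intro b hb
    unfold dN
    rw [if_pos rfl, if_neg (by omega)]
  have hd_hh : dN N (N-1) (N-1) = 0 := by unfold dN; rw [if_pos rfl, if_pos rfl]
  have hd_last : ∀ a < N-1, dN N a (N-1)
      = 1 + min (cyc (N-1) 0 a) (cyc (N-1) 2 a) := by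
    intro a ha
    unfold dN
    rw [if_neg (by omega), if_pos rfl]
  have hd_cyc : ∀ a < N-1, ∀ b < N-1, dN N a b = cyc (N-1) a b := by
    intro a ha b hb
    unfold dN
    rw [if_neg (by omega), if_neg (by omega)]
  have hB := sumB (s+2) (by omega)
  have hS := sumG s
  set g : ℕ → ℕ := fun b => min (cyc (N-1) 0 b) (cyc (N-1) 2 b) with hg
  set Sg := ∑ b ∈ range (N-1), g b with hSg
  have hSgval : Sg = (s+1)*(s+1)+1 := by
    rw [hSg, hN1, hg, hN1]
    exact hS
  set B := ∑ b ∈ range (N-1), min b ((N-1) - b) with hBdef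
  have hBval : B = (s+2)*(s+2) := by rw [hBdef, hN1]; exact hB
  have hsucc : ∀ f : ℕ → ℕ, ∑ b ∈ range N, f b = ∑ b ∈ range (N-1), f b + f (N-1) := by
    intro f
    conv_lhs => rw [show N = (N-1)+1 by omega]
    exact Finset.sum_range_succ f (N-1)
  -- hat row
  have hrow_hat : ∑ b ∈ range N, dN N (N-1) b = (N-1) + Sg := by
    rw [hsucc (fun b => dN N (N-1) b)]
    have h1 : ∑ b ∈ range (N-1), dN N (N-1) b = ∑ b ∈ range (N-1), (1 + g b) :=
      Finset.sum_congr rfl (fun b hb => by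
        rw [Finset.mem_range] at hb
        rw [hd_hat b hb, hg])
    rw [h1, Finset.sum_add_distrib, Finset.sum_const, Finset.card_range, hd_hh, hSg]
    simp [Nat.smul_one_eq_cast]
  -- cycle rows
  have hrow_cyc : ∀ a < N-1, ∑ b ∈ range N, dN N a b = B + (1 + g a) := by
    intro a ha
    rw [hsucc (fun b => dN N a b)]
    have h1 : ∑ b ∈ range (N-1), dN N a b = ∑ b ∈ range (N-1), cyc (N-1) a b :=
      Finset.sum_congr rfl (fun b hb => by
        rw [Finset.mem_range] at hb
        exact hd_cyc a ha b hb)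
    rw [h1, rowsum (N-1) a (by omega) (by omega), hd_last a ha, ← hBdef]
  -- total
  have hsplit : ∑ a ∈ range N, ∑ b ∈ range N, dN N a b
      = ∑ a ∈ range (N-1), (∑ b ∈ range N, dN N a b) + ∑ b ∈ range N, dN N (N-1) b :=
    hsucc (fun a => ∑ b ∈ range N, dN N a b)
  rw [hsplit, hrow_hat]
  have h2 : ∑ a ∈ range (N-1), (∑ b ∈ range N, dN N a b)
      = ∑ a ∈ range (N-1), (B + 1 + g a) :=
    Finset.sum_congr rfl (fun a ha => by
      rw [Finset.mem_range] at ha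
      rw [hrow_cyc a ha]
      omega)
  rw [h2, Finset.sum_add_distrib, Finset.sum_const, Finset.card_range, ← hSg, hSgval, hBval]
  have hN1' : N - 1 = 2*s+4 := by omega
  rw [hN1']
  ring

end HatAux

lemma two_mul_wiener_s18 [Fintype V] [DecidableEq V] [LinearOrder V] (G : SimpleGraph V) :
    2 * wiener G = ∑ i : V, ∑ j : V, G.dist i j := by
  classical
  set f : Sym2 V → ℕ :=
    Sym2.lift ⟨fun u v => G.dist u v, fun _ _ => SimpleGraph.dist_comm⟩ with hf
  have hdiag : ∀ e : Sym2 V, e.IsDiag → f e = 0 := by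
    intro e he
    induction e with
    | _ a b =>
      rw [Sym2.mk_isDiag_iff] at he
      subst he
      simp [hf, SimpleGraph.dist_self]
  have h1 : wiener G = ∑ e ∈ univ.filter (fun e : Sym2 V => ¬ e.IsDiag), f e := by
    rw [wiener, ← Finset.sum_filter_add_sum_filter_not univ (fun e : Sym2 V => e.IsDiag) f]
    rw [Finset.sum_eq_zero (fun e he => hdiag e (Finset.mem_filter.mp he).2), zero_add]
  have h2 : ∑ e ∈ univ.filter (fun e : Sym2 V => ¬ e.IsDiag), f e
      = ∑ p ∈ univ.offDiag.filter (fun p : V × V => p.1 < p.2), G.dist p.1 p.2 := by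
    calc ∑ e ∈ univ.filter (fun e : Sym2 V => ¬ e.IsDiag), f e
        = ∑ p ∈ univ.offDiag.filter (fun p : V × V => p.1 < p.2), f (Sym2.mk p.1 p.2) := by
          rw [← Finset.sym2_univ]
          convert Finset.sum_sym2_filter_not_isDiag univ f using 2 <;>
            · ext x
              simp [Finset.mem_offDiag]
      _ = ∑ p ∈ univ.offDiag.filter (fun p : V × V => p.1 < p.2), G.dist p.1 p.2 :=
          Finset.sum_congr rfl (fun p _ => by obtain ⟨x, y⟩ := p; simp [hf])
  -- now the RHS
  have h3 : ∑ i : V, ∑ j : V, G.dist i j = ∑ p ∈ univ ×ˢ univ, G.dist p.1 p.2 := by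
    rw [Finset.sum_product']
  have h4 : (univ : Finset V) ×ˢ univ = univ.diag ∪ univ.offDiag :=
    (Finset.diag_union_offDiag _).symm
  have h5 : ∑ p ∈ (univ : Finset V).diag, G.dist p.1 p.2 = 0 := by
    refine Finset.sum_eq_zero (fun p hp => ?_)
    rw [Finset.mem_diag] at hp
    rw [hp.2, SimpleGraph.dist_self]
  have h6 : ∑ p ∈ (univ : Finset V).offDiag, G.dist p.1 p.2
      = ∑ p ∈ univ.offDiag.filter (fun p : V × V => p.1 < p.2), G.dist p.1 p.2
      + ∑ p ∈ univ.offDiag.filter (fun p : V × V => ¬ p.1 < p.2), G.dist p.1 p.2 :=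
    (Finset.sum_filter_add_sum_filter_not _ _ _).symm
  have h7 : ∑ p ∈ univ.offDiag.filter (fun p : V × V => ¬ p.1 < p.2), G.dist p.1 p.2
      = ∑ p ∈ univ.offDiag.filter (fun p : V × V => p.1 < p.2), G.dist p.1 p.2 := by
    refine Finset.sum_nbij' (i := Prod.swap) (j := Prod.swap) ?_ ?_ ?_ ?_ ?_
    · intro p hp
      simp only [Finset.mem_filter, Finset.mem_offDiag, mem_univ, true_and] at *
      obtain ⟨hne, hlt⟩ := hp
      exact ⟨Ne.symm hne, lt_of_le_of_ne (not_lt.mp hlt) (Ne.symm hne)⟩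
    · intro p hp
      simp only [Finset.mem_filter, Finset.mem_offDiag, mem_univ, true_and] at *
      obtain ⟨hne, hlt⟩ := hp
      exact ⟨Ne.symm hne, not_lt.mpr (le_of_lt hlt)⟩
    · intro p _; exact Prod.swap_swap p
    · intro p _; exact Prod.swap_swap p
    · intro p _; exact SimpleGraph.dist_comm
  rw [h3, h4, Finset.sum_union (Finset.disjoint_diag_offDiag _), h5, zero_add, h6, h7,
    h1, h2]
  ring

theorem hattedCycle_wiener (n : ℕ) (hn : 5 ≤ n) (hodd : Odd n) :
    8 * (wiener (hattedCycle n) : ℤ) = (n : ℤ) ^ 3 - (n : ℤ) ^ 2 - (n : ℤ) + 17 := by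
  have h2w := two_mul_wiener_s18 (hattedCycle n)
  have hsum : ∑ i : Fin n, ∑ j : Fin n, (hattedCycle n).dist i j
      = ∑ a ∈ range n, ∑ b ∈ range n, HatAux.dN n a b := by
    calc ∑ i : Fin n, ∑ j : Fin n, (hattedCycle n).dist i j
        = ∑ i : Fin n, ∑ j : Fin n, HatAux.dN n i.val j.val :=
          Finset.sum_congr rfl (fun i _ =>
            Finset.sum_congr rfl (fun j _ => HatAux.dist_eq hn i j))
      _ = ∑ i : Fin n, ∑ b ∈ range n, HatAux.dN n i.val b :=
          Finset.sum_congr rfl (fun i _ =>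
            Fin.sum_univ_eq_sum_range (fun b => HatAux.dN n i.val b) n)
      _ = ∑ a ∈ range n, ∑ b ∈ range n, HatAux.dN n a b :=
          Fin.sum_univ_eq_sum_range (fun a => ∑ b ∈ range n, HatAux.dN n a b) n
  rw [hsum] at h2w
  obtain ⟨s, rfl⟩ : ∃ s, n = 2*s+5 := by
    obtain ⟨k, hk⟩ := hodd
    exact ⟨(n-5)/2, by omega⟩
  rw [HatAux.bigsum s] at h2w
  have hz := congrArg (Nat.cast : ℕ → ℤ) h2w
  push_cast at hz ⊢
  linear_combination 4 * hz
end

section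
/- If G is a 2-connected graph of odd order n, then every vertex v of G satisfies Tr_G(v) ≤ (n² − 1)/4. -/
open Finset

variable {V : Type*}

/-- A graph is 2-connected if it has at least 3 vertices and deleting any single
vertex leaves a connected graph. -/
def TwoConnected [Fintype V] (G : SimpleGraph V) : Prop :=
  3 ≤ Fintype.card V ∧ ∀ v : V, (G.induce ({v}ᶜ : Set V)).Connected

private lemma sum_odds_aux (m : ℕ) : ∑ k ∈ Finset.range m, (2 * k + 1) = m * m := by
  induction m with
  | zero => simp
  | succ m ih => rw [Finset.sum_range_succ, ih]; ring

/-- Discrete intermediate value theorem along a walk. -/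
private lemma ivt_aux {G : SimpleGraph V} (hc : G.Connected) (r : V) {a b : V}
    (p : G.Walk a b) : ∀ (m : ℕ), G.dist r a ≤ m → m ≤ G.dist r b →
    ∃ x ∈ p.support, G.dist r x = m := by
  induction p with
  | nil =>
    intro m h1 h2
    exact ⟨_, SimpleGraph.Walk.start_mem_support _, le_antisymm h1 h2⟩
  | @cons a' c' b' h q ih =>
    intro m h1 h2
    rcases eq_or_lt_of_le h1 with he | hlt
    · exact ⟨_, SimpleGraph.Walk.start_mem_support _, he⟩
    · have hac : G.dist a' c' = 1 := SimpleGraph.dist_eq_one_iff_adj.mpr h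
      have htri : G.dist r c' ≤ G.dist r a' + G.dist a' c' := hc.dist_triangle
      obtain ⟨x, hx, hxd⟩ := ih m (by omega) h2
      exact ⟨x, by simp [hx], hxd⟩

private lemma connected_aux [Fintype V] {G : SimpleGraph V} (h2 : TwoConnected G) :
    G.Connected := by
  classical
  have hcard : 3 ≤ Fintype.card V := h2.1
  have hne : Nonempty V := Fintype.card_pos_iff.mp (by omega)
  rw [SimpleGraph.connected_iff]
  refine ⟨fun u w => ?_, hne⟩
  have hex : ∃ x : V, x ≠ u ∧ x ≠ w := by
    by_contra hx
    push_neg at hx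
    have hsub : (Finset.univ : Finset V) ⊆ {u, w} := by
      intro x _
      rcases eq_or_ne x u with h | h
      · simp [h]
      · simp [hx x h]
    have hle := Finset.card_le_card hsub
    have h2' : ({u, w} : Finset V).card ≤ 2 :=
      (Finset.card_insert_le _ _).trans (by simp)
    rw [Finset.card_univ] at hle
    omega
  obtain ⟨x, hxu, hxw⟩ := hex
  have hcx := (h2.2 x).preconnected
  have hu : u ∈ ({x}ᶜ : Set V) := by simp [Ne.symm hxu]
  have hw : w ∈ ({x}ᶜ : Set V) := by simp [Ne.symm hxw]
  exact (hcx ⟨u, hu⟩ ⟨w, hw⟩).map (SimpleGraph.Embedding.induce _).toHom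

/-- In a 2-connected graph, for `1 ≤ k`, if some vertex has distance at least `k+1`
from `v`, then there are at least two vertices at distance exactly `k`. -/
private lemma level_aux [Fintype V] {G : SimpleGraph V} (h2 : TwoConnected G)
    (hc : G.Connected) (v : V) (k : ℕ) (hk : 1 ≤ k) (hex : ∃ u, k + 1 ≤ G.dist v u) :
    2 ≤ (Finset.univ.filter (fun u => G.dist v u = k)).card := by
  classical
  obtain ⟨u, hu⟩ := hex
  obtain ⟨p, -⟩ := (hc.preconnected v u).exists_walk_length_eq_dist
  obtain ⟨w, -, hw⟩ := ivt_aux hc v p k (by rw [SimpleGraph.dist_self]; exact Nat.zero_le _) (by omega)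
  have hvw : v ≠ w := by
    intro h; rw [← h, SimpleGraph.dist_self] at hw; omega
  have hcw := (h2.2 w).preconnected
  have hvmem : v ∈ ({w}ᶜ : Set V) := by simp [hvw]
  have humem : u ∈ ({w}ᶜ : Set V) := by
    simp only [Set.mem_compl_iff, Set.mem_singleton_iff]
    intro h; rw [h, hw] at hu; omega
  obtain ⟨q⟩ := hcw ⟨v, hvmem⟩ ⟨u, humem⟩
  let f := (SimpleGraph.Embedding.induce (G := G) ({w}ᶜ : Set V)).toHom
  have h1' : G.dist v (f ⟨v, hvmem⟩) ≤ k := by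
    show G.dist v v ≤ k
    rw [SimpleGraph.dist_self]; omega
  have h2' : k ≤ G.dist v (f ⟨u, humem⟩) := by
    show k ≤ G.dist v u
    omega
  obtain ⟨x, hxs, hx⟩ := ivt_aux hc v (q.map f) k h1' h2'
  have hxw : x ≠ w := by
    rw [SimpleGraph.Walk.support_map, List.mem_map] at hxs
    obtain ⟨y, -, hy⟩ := hxs
    rw [← hy]
    exact y.2
  rw [show (2 : ℕ) = 1 + 1 from rfl]
  apply Nat.succ_le_of_lt
  rw [Finset.one_lt_card]
  exact ⟨x, by simp [hx], w, by simp [hw], hxw⟩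

theorem transmission_le_of_twoConnected_odd [Fintype V] (G : SimpleGraph V)
    (h2 : TwoConnected G) (hodd : Odd (Fintype.card V)) (v : V) :
    4 * transmission G v ≤ Fintype.card V ^ 2 - 1 := by
  classical
  have hc := connected_aux h2
  set n := Fintype.card V with hn
  have hn3 : 3 ≤ n := h2.1
  set d : V → ℕ := G.dist v with hd
  set e : ℕ := Finset.univ.sup d with he
  have hneV : Nonempty V := Fintype.card_pos_iff.mp (by omega)
  obtain ⟨umax, -, hmax⟩ := Finset.exists_mem_eq_sup Finset.univ Finset.univ_nonempty d
  have hle : ∀ u, d u ≤ e := fun u => Finset.le_sup (Finset.mem_univ u)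
  set A : ℕ → Finset V := fun k => Finset.univ.filter (fun u => k ≤ d u) with hA
  -- transmission as sum of tail counts
  have hsum : transmission G v = ∑ k ∈ Finset.range e, (A (k + 1)).card := by
    unfold transmission
    calc ∑ u, G.dist v u
        = ∑ u, ∑ k ∈ Finset.range e, (if k + 1 ≤ d u then 1 else 0) := by
          refine Finset.sum_congr rfl fun u _ => ?_
          rw [← Finset.card_filter]
          have hfe : (Finset.range e).filter (fun k => k + 1 ≤ d u)
              = Finset.range (d u) := by
            ext k
            simp only [Finset.mem_filter, Finset.mem_range]
            have := hle u
            omega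
          rw [hfe, Finset.card_range]
      _ = ∑ k ∈ Finset.range e, ∑ u, (if k + 1 ≤ d u then 1 else 0) := Finset.sum_comm
      _ = ∑ k ∈ Finset.range e, (A (k + 1)).card := by
          refine Finset.sum_congr rfl fun k _ => ?_
          rw [hA, Finset.card_filter]
  -- key cardinality bound
  have hbound : ∀ k, k < e → (A (k + 1)).card + (2 * k + 1) ≤ n := by
    intro k
    induction k with
    | zero =>
      intro _
      show (A 1).card + (2 * 0 + 1) ≤ n
      have hsub : A 1 ⊆ Finset.univ.erase v := by
        intro x hx
        rw [hA, Finset.mem_filter] at hx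
        rw [Finset.mem_erase]
        refine ⟨fun hxv => ?_, Finset.mem_univ x⟩
        rw [hxv] at hx
        have : d v = 0 := SimpleGraph.dist_self
        omega
      have := Finset.card_le_card hsub
      rw [Finset.card_erase_of_mem (Finset.mem_univ v), Finset.card_univ] at this
      omega
    | succ k ih =>
      intro hk
      show (A (k + 2)).card + (2 * (k + 1) + 1) ≤ n
      have ihh := ih (by omega)
      have hlvl : 2 ≤ (Finset.univ.filter (fun u => d u = k + 1)).card := by
        refine level_aux h2 hc v (k + 1) (by omega) ⟨umax, ?_⟩
        have : d umax = e := hmax.symm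
        show k + 1 + 1 ≤ d umax
        omega
      have hdisj : Disjoint (A (k + 2)) (Finset.univ.filter (fun u => d u = k + 1)) := by
        rw [Finset.disjoint_left]
        intro x hx1 hx2
        rw [hA, Finset.mem_filter] at hx1
        rw [Finset.mem_filter] at hx2
        omega
      have hsub : A (k + 2) ∪ Finset.univ.filter (fun u => d u = k + 1) ⊆ A (k + 1) := by
        intro x hx
        rw [Finset.mem_union] at hx
        rw [hA, Finset.mem_filter]
        refine ⟨Finset.mem_univ x, ?_⟩
        rcases hx with hx | hx
        · rw [hA, Finset.mem_filter] at hx; omega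
        · rw [Finset.mem_filter] at hx; omega
      have hcards := Finset.card_le_card hsub
      rw [Finset.card_union_of_disjoint hdisj] at hcards
      omega
  -- transmission + e^2 ≤ e * n
  have hkey : transmission G v + e * e ≤ e * n := by
    rw [hsum, ← sum_odds_aux e, ← Finset.sum_add_distrib]
    calc ∑ k ∈ Finset.range e, ((A (k + 1)).card + (2 * k + 1))
        ≤ ∑ _k ∈ Finset.range e, n :=
          Finset.sum_le_sum fun k hk => hbound k (Finset.mem_range.mp hk)
      _ = e * n := by rw [Finset.sum_const, Finset.card_range, smul_eq_mul]
  -- 2e + 1 ≤ n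
  have hebd : 2 * e + 1 ≤ n := by
    rcases Nat.eq_zero_or_pos e with h0 | hpos
    · omega
    · have h1 := hbound (e - 1) (by omega)
      have hmem : umax ∈ A (e - 1 + 1) := by
        rw [hA, Finset.mem_filter]
        exact ⟨Finset.mem_univ _, by omega⟩
      have hpos' : 1 ≤ (A (e - 1 + 1)).card := Finset.card_pos.mpr ⟨umax, hmem⟩
      have h2e : 2 * e ≤ n := by omega
      obtain ⟨m, hm⟩ := hodd
      omega
  -- finish
  obtain ⟨c, hc2, hc1⟩ : ∃ c, n = 2 * e + 1 + c ∧ 0 ≤ c := ⟨n - (2 * e + 1), by omega, by omega⟩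
  have hfin : 4 * transmission G v + 1 ≤ n ^ 2 := by
    have hT : transmission G v ≤ e * n - e * e := by omega
    nlinarith [hkey, hc2]
  exact Nat.le_sub_one_of_lt (by omega)
end
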